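/- arXiv:2201.10367 — 6 statements merged into one kernel-verified Lean document; each statement's English description precedes it below -/
import Mathlib

section
/- Let W ∈ ℝ^{d×2d}, written in block form W = (W₁ W₂) with W₁, W₂ ∈ ℝ^{d×d}. Let Σ := [[−P₁, P₁],[1_d, 1_d]] ∈ ℝ^{2d×2d} (which is invertible since P₁ is) and J := [[0, 1_d],[1_d, 0]]. Then the following are equivalent: (i) W has rank d and the symmetric matrix W·Σ⁻¹·J·(W·Σ⁻¹)ᵀ is positive semidefinite; (ii) there exist a matrix M ∈ ℝ^{d×d} with spectral (ℓ²-operator) norm ‖M‖ ≤ 1 and an invertible matrix K ∈ ℝ^{d×d} such that W = K·(Q₋ − MQ₊ | Q₊ − MQ₋) (a d×2d block row). Moreover, for W of the form in (ii) with K invertible and ‖M‖ ≤ 1, the matrix W·Σ⁻¹·J·(W·Σ⁻¹)ᵀ is positive definite if and only if ‖M‖ < 1. -/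
open Matrix

noncomputable section

/-- The spectral (ℓ²-operator) norm of a square real matrix. -/
def specNorm {d : ℕ} (A : Matrix (Fin d) (Fin d) ℝ) : ℝ :=
  ‖Matrix.toEuclideanCLM (𝕜 := ℝ) A‖

namespace Lem23

variable {d : ℕ}

lemma psd_diag_nonneg {A : Matrix (Fin d) (Fin d) ℝ} (hA : A.PosSemidef) (i : Fin d) :
    0 ≤ A i i := by
  have := hA.dotProduct_mulVec_nonneg (Pi.single i 1)
  simpa [Matrix.mulVec_single, single_dotProduct] using this

lemma diag_entry_eq {A : Matrix (Fin d) (Fin d) ℝ} (i : Fin d) :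
    A i i = Pi.single i 1 ⬝ᵥ (A *ᵥ Pi.single i 1) := by
  simp [Matrix.mulVec_single, single_dotProduct]

lemma eq_zero_of_trace_transpose_mul_self {N : Matrix (Fin d) (Fin d) ℝ}
    (h : (Nᵀ * N).trace = 0) : N = 0 := by
  have h' : ∑ i, ∑ j, N j i * N j i = 0 := by
    simpa [Matrix.trace, Matrix.diag, Matrix.mul_apply] using h
  have h1 := (Finset.sum_eq_zero_iff_of_nonneg
    (fun i _ => Finset.sum_nonneg fun j _ => mul_self_nonneg (N j i))).mp h'
  ext i j
  have h2 := (Finset.sum_eq_zero_iff_of_nonneg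
    (fun k _ => mul_self_nonneg (N k j))).mp (h1 j (Finset.mem_univ _)) i (Finset.mem_univ _)
  have := mul_self_eq_zero.mp h2
  simpa using this

lemma transpose_eq_of_hermitian {A : Matrix (Fin d) (Fin d) ℝ} (hA : A.IsHermitian) :
    Aᵀ = A := by
  rw [← Matrix.conjTranspose_eq_transpose_of_trivial]; exact hA

lemma psd_trace_zero_conj {A C : Matrix (Fin d) (Fin d) ℝ} (hA : A.PosDef)
    (h : (Cᵀ * A * C).trace = 0) : C = 0 := by
  have hpsd : (Cᵀ * A * C).PosSemidef := by
    have := hA.posSemidef.conjTranspose_mul_mul_same C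
    rwa [Matrix.conjTranspose_eq_transpose_of_trivial] at this
  have hdiag : ∀ i, (Cᵀ * A * C) i i = 0 := by
    intro i
    have hsum : ∑ i, (Cᵀ * A * C) i i = 0 := h
    exact (Finset.sum_eq_zero_iff_of_nonneg
      (fun k _ => psd_diag_nonneg hpsd k)).mp hsum i (Finset.mem_univ _)
  have hcol : ∀ i, C *ᵥ Pi.single i 1 = 0 := by
    intro i
    by_contra hne
    have hpos := hA.dotProduct_mulVec_pos hne
    rw [star_trivial] at hpos
    have heq : (Cᵀ * A * C) i i
        = (C *ᵥ Pi.single i 1) ⬝ᵥ (A *ᵥ (C *ᵥ Pi.single i 1)) := by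
      have h0 := diag_entry_eq (A := Cᵀ * A * C) i
      rw [h0, Matrix.mul_assoc, ← Matrix.mulVec_mulVec,
        Matrix.dotProduct_mulVec, Matrix.vecMul_transpose, ← Matrix.mulVec_mulVec]
    rw [hdiag i] at heq
    rw [← heq] at hpos
    exact lt_irrefl _ hpos
  ext i j
  have := congrFun (hcol j) i
  simpa [Matrix.mulVec_single] using this

/-- If `A` is positive definite, symmetric, and `A^2` commutes with `B`, then `A` commutes
with `B`. -/
lemma commute_of_sq_commute {A B : Matrix (Fin d) (Fin d) ℝ} (hA : A.PosDef)
    (hAs : Aᵀ = A) (hBs : Bᵀ = B) (h : A ^ 2 * B = B * A ^ 2) :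
    A * B = B * A := by
  set C := A * B - B * A with hC
  have hkey : A * C + C * A = 0 := by
    simp only [hC]
    have : A * (A * B - B * A) + (A * B - B * A) * A = A ^ 2 * B - B * A ^ 2 := by
      noncomm_ring
    rw [this, h, sub_self]
  have h1 : (Cᵀ * (A * C + C * A)).trace = 0 := by rw [hkey, Matrix.mul_zero, Matrix.trace_zero]
  have hCt : Cᵀ = -C := by
    simp [hC, Matrix.transpose_sub, Matrix.transpose_mul, hAs, hBs]
  have h2 : (Cᵀ * (A * C + C * A)).trace = (Cᵀ * A * C).trace + (C * A * Cᵀ).trace := by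
    rw [Matrix.mul_add, Matrix.trace_add, Matrix.mul_assoc Cᵀ A C]
    congr 1
    rw [Matrix.trace_mul_comm Cᵀ (C * A)]
  have hpsd1 : (Cᵀ * A * C).PosSemidef := by
    have := hA.posSemidef.conjTranspose_mul_mul_same C
    rwa [Matrix.conjTranspose_eq_transpose_of_trivial] at this
  have hpsd2 : (C * A * Cᵀ).PosSemidef := by
    have := hA.posSemidef.mul_mul_conjTranspose_same C
    rwa [Matrix.conjTranspose_eq_transpose_of_trivial] at this
  have htr1 : 0 ≤ (Cᵀ * A * C).trace := Finset.sum_nonneg fun i _ => psd_diag_nonneg hpsd1 i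
  have htr2 : 0 ≤ (C * A * Cᵀ).trace := Finset.sum_nonneg fun i _ => psd_diag_nonneg hpsd2 i
  have htr0 : (Cᵀ * A * C).trace = 0 := by rw [h2] at h1; linarith
  have hC0 : C = 0 := psd_trace_zero_conj hA htr0
  have := sub_eq_zero.mp (hC ▸ hC0)
  exact this

/-! ### Spectral norm -/

lemma norm_sq_equiv (v : Fin d → ℝ) :
    ‖(WithLp.equiv 2 (Fin d → ℝ)).symm v‖ ^ 2 = v ⬝ᵥ v := by
  rw [← real_inner_self_eq_norm_sq, WithLp.equiv_symm_apply,
    EuclideanSpace.inner_eq_star_dotProduct]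
  simp

lemma clm_apply (M : Matrix (Fin d) (Fin d) ℝ) (v : Fin d → ℝ) :
    Matrix.toEuclideanCLM (𝕜 := ℝ) M ((WithLp.equiv 2 (Fin d → ℝ)).symm v)
      = (WithLp.equiv 2 (Fin d → ℝ)).symm (M *ᵥ v) := by
  rw [WithLp.equiv_symm_apply, Matrix.toEuclideanCLM_toLp]

lemma quad_eq (M : Matrix (Fin d) (Fin d) ℝ) (v : Fin d → ℝ) :
    v ⬝ᵥ ((1 - Mᵀ * M) *ᵥ v)
      = ‖(WithLp.equiv 2 (Fin d → ℝ)).symm v‖ ^ 2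
        - ‖Matrix.toEuclideanCLM (𝕜 := ℝ) M ((WithLp.equiv 2 (Fin d → ℝ)).symm v)‖ ^ 2 := by
  rw [clm_apply, norm_sq_equiv, norm_sq_equiv]
  rw [Matrix.sub_mulVec, dotProduct_sub, Matrix.one_mulVec]
  congr 1
  rw [← Matrix.mulVec_mulVec, Matrix.dotProduct_mulVec, Matrix.vecMul_transpose]

lemma herm_one_sub (M : Matrix (Fin d) (Fin d) ℝ) : (1 - Mᵀ * M).IsHermitian := by
  rw [Matrix.IsHermitian, Matrix.conjTranspose_eq_transpose_of_trivial]
  simp [Matrix.transpose_sub, Matrix.transpose_mul]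

set_option synthInstance.maxHeartbeats 1000000 in
lemma specNorm_transpose (M : Matrix (Fin d) (Fin d) ℝ) : specNorm Mᵀ = specNorm M := by
  rw [specNorm, specNorm, ← Matrix.conjTranspose_eq_transpose_of_trivial,
    ← Matrix.star_eq_conjTranspose, map_star, ContinuousLinearMap.star_eq_adjoint,
    LinearIsometryEquiv.norm_map]

lemma specNorm_le_one_iff (M : Matrix (Fin d) (Fin d) ℝ) :
    specNorm M ≤ 1 ↔ (1 - Mᵀ * M).PosSemidef := by
  set T := Matrix.toEuclideanCLM (𝕜 := ℝ) M with hT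
  constructor
  · intro h
    refine Matrix.PosSemidef.of_dotProduct_mulVec_nonneg (herm_one_sub M) fun v => ?_
    rw [star_trivial, quad_eq]
    have h1 : ‖T ((WithLp.equiv 2 (Fin d → ℝ)).symm v)‖
        ≤ ‖(WithLp.equiv 2 (Fin d → ℝ)).symm v‖ := by
      calc ‖T ((WithLp.equiv 2 (Fin d → ℝ)).symm v)‖
          ≤ ‖T‖ * ‖(WithLp.equiv 2 (Fin d → ℝ)).symm v‖ := T.le_opNorm _
        _ ≤ 1 * ‖(WithLp.equiv 2 (Fin d → ℝ)).symm v‖ :=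
            mul_le_mul_of_nonneg_right h (norm_nonneg _)
        _ = _ := one_mul _
    nlinarith [norm_nonneg (T ((WithLp.equiv 2 (Fin d → ℝ)).symm v)),
      norm_nonneg ((WithLp.equiv 2 (Fin d → ℝ)).symm v)]
  · intro h
    rw [specNorm]
    refine ContinuousLinearMap.opNorm_le_bound _ zero_le_one (fun x => ?_)
    have hx : x = (WithLp.equiv 2 (Fin d → ℝ)).symm (WithLp.equiv 2 (Fin d → ℝ) x) := by simp
    have h2 := h.dotProduct_mulVec_nonneg (WithLp.equiv 2 (Fin d → ℝ) x)
    rw [star_trivial, quad_eq, ← hx] at h2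
    rw [one_mul]
    nlinarith [norm_nonneg (T x), norm_nonneg x]

lemma specNorm_lt_one_iff (M : Matrix (Fin d) (Fin d) ℝ) :
    specNorm M < 1 ↔ (1 - Mᵀ * M).PosDef := by
  set T := Matrix.toEuclideanCLM (𝕜 := ℝ) M with hT
  constructor
  · intro h
    refine Matrix.PosDef.of_dotProduct_mulVec_pos (herm_one_sub M) fun v hv => ?_
    rw [star_trivial, quad_eq]
    have hev : (WithLp.equiv 2 (Fin d → ℝ)).symm v ≠ 0 := by
      simpa using hv
    have hn : 0 < ‖(WithLp.equiv 2 (Fin d → ℝ)).symm v‖ := norm_pos_iff.mpr hev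
    have h1 := T.le_opNorm ((WithLp.equiv 2 (Fin d → ℝ)).symm v)
    have : ‖T ((WithLp.equiv 2 (Fin d → ℝ)).symm v)‖
        < ‖(WithLp.equiv 2 (Fin d → ℝ)).symm v‖ := by
      calc ‖T ((WithLp.equiv 2 (Fin d → ℝ)).symm v)‖
          ≤ specNorm M * ‖(WithLp.equiv 2 (Fin d → ℝ)).symm v‖ := h1
        _ < 1 * ‖(WithLp.equiv 2 (Fin d → ℝ)).symm v‖ := mul_lt_mul_of_pos_right h hn
        _ = _ := one_mul _
    nlinarith [norm_nonneg (T ((WithLp.equiv 2 (Fin d → ℝ)).symm v))]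
  · intro h
    rcases Nat.eq_zero_or_pos d with hd | hd
    · subst hd
      have h0 : specNorm M ≤ 0 := by
        rw [specNorm]
        refine ContinuousLinearMap.opNorm_le_bound _ le_rfl (fun x => ?_)
        have : x = 0 := Subsingleton.elim x 0
        simp [this]
      linarith
    · have hquad : ∀ x : EuclideanSpace ℝ (Fin d), x ≠ 0 → ‖T x‖ < ‖x‖ := by
        intro x hx
        have h2 := h.dotProduct_mulVec_pos (x := WithLp.equiv 2 (Fin d → ℝ) x)
          (by
            intro hc
            exact hx (by simpa using congrArg (WithLp.equiv 2 (Fin d → ℝ)).symm hc))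
        have hx' : x = (WithLp.equiv 2 (Fin d → ℝ)).symm (WithLp.equiv 2 (Fin d → ℝ) x) := by
          simp
        rw [star_trivial, quad_eq, ← hx'] at h2
        nlinarith [norm_nonneg (T x), norm_nonneg x]
      obtain ⟨x₀, hx₀mem, hx₀max⟩ :=
        (isCompact_sphere (0 : EuclideanSpace ℝ (Fin d)) 1).exists_isMaxOn
          ⟨EuclideanSpace.single ⟨0, hd⟩ (1 : ℝ), by
            simp [mem_sphere_zero_iff_norm, EuclideanSpace.norm_single]⟩
          (T.continuous.norm.continuousOn)
      have hx₀norm : ‖x₀‖ = 1 := mem_sphere_zero_iff_norm.mp hx₀mem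
      have hx₀ne : x₀ ≠ 0 := by
        intro hc; rw [hc] at hx₀norm; simp at hx₀norm
      have hc1 : ‖T x₀‖ < 1 := by
        have := hquad x₀ hx₀ne; rwa [hx₀norm] at this
      have hle : specNorm M ≤ ‖T x₀‖ := by
        rw [specNorm]
        refine ContinuousLinearMap.opNorm_le_bound _ (norm_nonneg _) (fun x => ?_)
        rcases eq_or_ne x 0 with rfl | hx
        · simp
        · have hnx : 0 < ‖x‖ := norm_pos_iff.mpr hx
          have hy : ‖(‖x‖⁻¹ • x : EuclideanSpace ℝ (Fin d))‖ = 1 := by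
            rw [norm_smul, norm_inv, norm_norm, inv_mul_cancel₀ hnx.ne']
          have hmem : (‖x‖⁻¹ • x : EuclideanSpace ℝ (Fin d)) ∈
              Metric.sphere (0 : EuclideanSpace ℝ (Fin d)) 1 :=
            mem_sphere_zero_iff_norm.mpr hy
          have hmax := hx₀max hmem
          simp only [Set.mem_setOf_eq] at hmax
          rw [_root_.map_smul, norm_smul, norm_inv, norm_norm] at hmax
          calc ‖T x‖ = ‖x‖ * (‖x‖⁻¹ * ‖T x‖) := by field_simp
            _ ≤ ‖x‖ * ‖T x₀‖ := mul_le_mul_of_nonneg_left hmax (norm_nonneg _)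
            _ = ‖T x₀‖ * ‖x‖ := mul_comm _ _
      linarith

/-! ### Congruence lemmas -/

lemma conj_psd {N : Matrix (Fin d) (Fin d) ℝ} (hN : N.PosSemidef)
    (K : Matrix (Fin d) (Fin d) ℝ) : (K * N * Kᵀ).PosSemidef := by
  have := hN.mul_mul_conjTranspose_same K
  rwa [Matrix.conjTranspose_eq_transpose_of_trivial] at this

lemma conj_psd_iff {K N : Matrix (Fin d) (Fin d) ℝ} (hK : IsUnit K.det) :
    (K * N * Kᵀ).PosSemidef ↔ N.PosSemidef := by
  constructor
  · intro h
    have h2 := conj_psd h K⁻¹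
    have e : K⁻¹ * (K * N * Kᵀ) * (K⁻¹)ᵀ = N := by
      rw [Matrix.transpose_nonsing_inv]
      have e1 : K⁻¹ * (K * N * Kᵀ) * (Kᵀ)⁻¹ = K⁻¹ * K * N * (Kᵀ * (Kᵀ)⁻¹) := by
        noncomm_ring
      rw [e1, Matrix.nonsing_inv_mul _ hK,
        Matrix.mul_nonsing_inv _ (by rwa [Matrix.det_transpose]), Matrix.one_mul,
        Matrix.mul_one]
    rwa [e] at h2
  · intro h; exact conj_psd h K

lemma conj_posDef {N : Matrix (Fin d) (Fin d) ℝ} (hN : N.PosDef)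
    {K : Matrix (Fin d) (Fin d) ℝ} (hK : IsUnit K.det) : (K * N * Kᵀ).PosDef := by
  refine Matrix.PosDef.of_dotProduct_mulVec_pos ?_ ?_
  · rw [Matrix.IsHermitian, Matrix.conjTranspose_eq_transpose_of_trivial]
    have hNT : Nᵀ = N := transpose_eq_of_hermitian hN.1
    simp [Matrix.transpose_mul, hNT, Matrix.mul_assoc]
  · intro x hx
    rw [star_trivial]
    have e : x ⬝ᵥ ((K * N * Kᵀ) *ᵥ x) = (Kᵀ *ᵥ x) ⬝ᵥ (N *ᵥ (Kᵀ *ᵥ x)) := by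
      rw [Matrix.mul_assoc, ← Matrix.mulVec_mulVec, Matrix.dotProduct_mulVec,
        ← Matrix.mulVec_transpose, ← Matrix.mulVec_mulVec]
    rw [e]
    have hKT : IsUnit Kᵀ.det := by rwa [Matrix.det_transpose]
    have hinj := Matrix.mulVec_injective_iff_isUnit.mpr ((Matrix.isUnit_iff_isUnit_det _).mpr hKT)
    have hne : Kᵀ *ᵥ x ≠ 0 := by
      intro hc
      apply hx
      have : Kᵀ *ᵥ x = Kᵀ *ᵥ 0 := by rw [hc, Matrix.mulVec_zero]
      exact hinj this
    have := hN.dotProduct_mulVec_pos hne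
    rwa [star_trivial] at this

lemma conj_posDef_iff {K N : Matrix (Fin d) (Fin d) ℝ} (hK : IsUnit K.det) :
    (K * N * Kᵀ).PosDef ↔ N.PosDef := by
  constructor
  · intro h
    have hKi : IsUnit (K⁻¹).det := by
      exact Matrix.isUnit_nonsing_inv_det _ hK
    have h2 := conj_posDef h hKi
    have e : K⁻¹ * (K * N * Kᵀ) * (K⁻¹)ᵀ = N := by
      rw [Matrix.transpose_nonsing_inv]
      have e1 : K⁻¹ * (K * N * Kᵀ) * (Kᵀ)⁻¹ = K⁻¹ * K * N * (Kᵀ * (Kᵀ)⁻¹) := by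
        noncomm_ring
      rw [e1, Matrix.nonsing_inv_mul _ hK,
        Matrix.mul_nonsing_inv _ (by rwa [Matrix.det_transpose]), Matrix.one_mul,
        Matrix.mul_one]
    rwa [e] at h2
  · intro h; exact conj_posDef h hK

lemma psd_smul_iff {A : Matrix (Fin d) (Fin d) ℝ} {c : ℝ} (hc : 0 < c) :
    (c • A).PosSemidef ↔ A.PosSemidef := by
  have main : ∀ (c : ℝ), 0 < c → ∀ (A : Matrix (Fin d) (Fin d) ℝ),
      A.PosSemidef → (c • A).PosSemidef := by
    intro c hc A hA
    refine Matrix.PosSemidef.of_dotProduct_mulVec_nonneg ?_ (fun x => ?_)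
    · rw [Matrix.IsHermitian, Matrix.conjTranspose_eq_transpose_of_trivial,
        Matrix.transpose_smul, transpose_eq_of_hermitian hA.1]
    · rw [star_trivial, Matrix.smul_mulVec, dotProduct_smul]
      have := hA.dotProduct_mulVec_nonneg x
      rw [star_trivial] at this
      exact smul_nonneg hc.le this
  constructor
  · intro h
    have := main c⁻¹ (by positivity) _ h
    rwa [smul_smul, inv_mul_cancel₀ hc.ne', one_smul] at this
  · exact main c hc A

lemma posdef_smul_iff {A : Matrix (Fin d) (Fin d) ℝ} {c : ℝ} (hc : 0 < c) :
    (c • A).PosDef ↔ A.PosDef := by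
  have main : ∀ (c : ℝ), 0 < c → ∀ (A : Matrix (Fin d) (Fin d) ℝ),
      A.PosDef → (c • A).PosDef := by
    intro c hc A hA
    refine Matrix.PosDef.of_dotProduct_mulVec_pos ?_ (fun x hx => ?_)
    · rw [Matrix.IsHermitian, Matrix.conjTranspose_eq_transpose_of_trivial,
        Matrix.transpose_smul, transpose_eq_of_hermitian hA.1]
    · rw [star_trivial, Matrix.smul_mulVec, dotProduct_smul]
      have := hA.dotProduct_mulVec_pos hx
      rw [star_trivial] at this
      exact smul_pos hc this
  constructor
  · intro h
    have := main c⁻¹ (by positivity) _ h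
    rwa [smul_smul, inv_mul_cancel₀ hc.ne', one_smul] at this
  · exact main c hc A

/-! ### Rank lemmas -/

lemma rank_eq_isUnit {A : Matrix (Fin d) (Fin d) ℝ} (h : A.rank = d) : IsUnit A.det := by
  have hr : LinearMap.range A.mulVecLin = ⊤ := by
    apply Submodule.eq_top_of_finrank_eq
    rw [show Module.finrank ℝ (Fin d → ℝ) = d by simp]
    exact h
  have hsurj : Function.Surjective A.mulVecLin := LinearMap.range_eq_top.mp hr
  have hinj : Function.Injective A.mulVecLin :=
    (LinearMap.injective_iff_surjective).mpr hsurj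
  rw [isUnit_iff_ne_zero]
  intro hdet
  obtain ⟨v, hv, hv0⟩ := (Matrix.exists_mulVec_eq_zero_iff).mpr hdet
  apply hv
  have : A.mulVecLin v = A.mulVecLin 0 := by
    simpa [Matrix.mulVecLin_apply] using hv0
  exact hinj this

lemma ker_eq_zero_of_rank {n : Type*} [Fintype n] {W : Matrix (Fin d) n ℝ}
    (h : W.rank = d) {v : Fin d → ℝ} (h0 : Wᵀ *ᵥ v = 0) : v = 0 := by
  have hrt : Wᵀ.rank = d := by rw [Matrix.rank_transpose]; exact h
  have hrn := Wᵀ.mulVecLin.finrank_range_add_finrank_ker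
  rw [show Module.finrank ℝ (Fin d → ℝ) = d by simp] at hrn
  rw [Matrix.rank] at hrt
  have hker0 : Module.finrank ℝ (LinearMap.ker Wᵀ.mulVecLin) = 0 := by omega
  have hker : LinearMap.ker Wᵀ.mulVecLin = ⊥ := Submodule.finrank_eq_zero.mp hker0
  have hv : v ∈ LinearMap.ker Wᵀ.mulVecLin := by
    rw [LinearMap.mem_ker, Matrix.mulVecLin_apply]
    exact h0
  rw [hker] at hv
  simpa using hv

lemma rank_eq_of_posDef_mul {W : Matrix (Fin d) (Fin d ⊕ Fin d) ℝ}
    (h : (W * Wᵀ).PosDef) : W.rank = d := by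
  rw [← Matrix.rank_self_mul_transpose]
  rw [Matrix.rank_of_isUnit _ h.isUnit, Fintype.card_fin]

end Lem23

open Lem23 in
/-- **Lemma 2.3.** Characterisation of the boundary matrices `W` for which the
port-Hamiltonian operator is m-accretive, via `W = K (Q₋ − MQ₊ | Q₊ − MQ₋)`
with `K` invertible and `‖M‖ ≤ 1`; moreover strict positive definiteness
corresponds to `‖M‖ < 1`. -/
theorem stmt_1 {d : ℕ} (P1 absP1 Qp Qm : Matrix (Fin d) (Fin d) ℝ)
    (hP1symm : P1.IsSymm) (hP1inv : IsUnit P1.det)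
    -- `absP1` is the unique symmetric positive definite square root of `P1 ^ 2`
    (habs : absP1.PosDef) (habs2 : absP1 ^ 2 = P1 ^ 2)
    -- `Qp` is the unique symmetric positive semidefinite square root of `(|P₁| + P₁)/2`
    (hQp : Qp.PosSemidef) (hQp2 : Qp ^ 2 = (2 : ℝ)⁻¹ • (absP1 + P1))
    -- `Qm` is the unique symmetric positive semidefinite square root of `(|P₁| − P₁)/2`
    (hQm : Qm.PosSemidef) (hQm2 : Qm ^ 2 = (2 : ℝ)⁻¹ • (absP1 - P1))
    (W : Matrix (Fin d) (Fin d ⊕ Fin d) ℝ)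
    (Sig J : Matrix (Fin d ⊕ Fin d) (Fin d ⊕ Fin d) ℝ)
    (hSig : Sig = Matrix.fromBlocks (-P1) P1 1 1)
    (hJ : J = Matrix.fromBlocks 0 1 1 0) :
    ((W.rank = d ∧ (W * Sig⁻¹ * J * (W * Sig⁻¹)ᵀ).PosSemidef) ↔
      (∃ M K : Matrix (Fin d) (Fin d) ℝ, specNorm M ≤ 1 ∧ IsUnit K.det ∧
        W = K * Matrix.fromCols (Qm - M * Qp) (Qp - M * Qm))) ∧
    (∀ M K : Matrix (Fin d) (Fin d) ℝ, specNorm M ≤ 1 → IsUnit K.det →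
      W = K * Matrix.fromCols (Qm - M * Qp) (Qp - M * Qm) →
      ((W * Sig⁻¹ * J * (W * Sig⁻¹)ᵀ).PosDef ↔ specNorm M < 1)) := by
  classical
  have hPT : P1ᵀ = P1 := hP1symm
  have habsT : absP1ᵀ = absP1 := transpose_eq_of_hermitian habs.1
  have hQpT : Qpᵀ = Qp := transpose_eq_of_hermitian hQp.1
  have hQmT : Qmᵀ = Qm := transpose_eq_of_hermitian hQm.1
  have hcomm : absP1 * P1 = P1 * absP1 :=
    commute_of_sq_commute habs habsT hPT (by rw [habs2, ← pow_succ, ← pow_succ'])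
  have hsq : Qm ^ 2 * Qp ^ 2 = 0 := by
    rw [hQm2, hQp2, Matrix.smul_mul, Matrix.mul_smul, smul_smul]
    have e : (absP1 - P1) * (absP1 + P1)
        = absP1 ^ 2 - P1 ^ 2 + (absP1 * P1 - P1 * absP1) := by noncomm_ring
    rw [e, hcomm, habs2]
    simp
  have hQmQp : Qm * Qp = 0 := by
    apply eq_zero_of_trace_transpose_mul_self
    have e : (Qm * Qp)ᵀ * (Qm * Qp) = Qp * (Qm ^ 2 * Qp) := by
      rw [Matrix.transpose_mul, hQpT, hQmT]
      noncomm_ring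
    rw [e, Matrix.trace_mul_comm, Matrix.mul_assoc,
      show Qp * Qp = Qp ^ 2 from (sq Qp).symm, hsq, Matrix.trace_zero]
  have hQpQm : Qp * Qm = 0 := by
    have := congrArg Matrix.transpose hQmQp
    simpa [Matrix.transpose_mul, hQpT, hQmT] using this
  set S := Qp + Qm with hSdef
  set D := Qp - Qm with hDdef
  have hST : Sᵀ = S := by rw [hSdef, Matrix.transpose_add, hQpT, hQmT]
  have hDT : Dᵀ = D := by rw [hDdef, Matrix.transpose_sub, hQpT, hQmT]
  have hQQ : Qp * Qp + Qm * Qm = absP1 := by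
    rw [show Qp * Qp = Qp ^ 2 from (sq Qp).symm, show Qm * Qm = Qm ^ 2 from (sq Qm).symm,
      hQp2, hQm2]
    module
  have hSS : S * S = absP1 := by
    rw [hSdef]
    have e : (Qp + Qm) * (Qp + Qm) = Qp * Qp + Qm * Qm + (Qp * Qm + Qm * Qp) := by
      noncomm_ring
    rw [e, hQpQm, hQmQp, hQQ]
    simp
  have hDD : D * D = absP1 := by
    rw [hDdef]
    have e : (Qp - Qm) * (Qp - Qm) = Qp * Qp + Qm * Qm - (Qp * Qm + Qm * Qp) := by
      noncomm_ring
    rw [e, hQpQm, hQmQp, hQQ]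
    simp
  have hQQ2 : Qp * Qp - Qm * Qm = P1 := by
    rw [show Qp * Qp = Qp ^ 2 from (sq Qp).symm, show Qm * Qm = Qm ^ 2 from (sq Qm).symm,
      hQp2, hQm2]
    module
  have hSD : S * D = P1 := by
    rw [hSdef, hDdef]
    have e : (Qp + Qm) * (Qp - Qm) = Qp * Qp - Qm * Qm - (Qp * Qm - Qm * Qp) := by
      noncomm_ring
    rw [e, hQpQm, hQmQp, hQQ2]
    simp
  have hDS : D * S = P1 := by
    rw [hSdef, hDdef]
    have e : (Qp - Qm) * (Qp + Qm) = Qp * Qp - Qm * Qm + (Qp * Qm - Qm * Qp) := by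
      noncomm_ring
    rw [e, hQpQm, hQmQp, hQQ2]
    simp
  have hdetabs : absP1.det ≠ 0 := habs.det_pos.ne'
  have hdetS : IsUnit S.det := by
    rw [isUnit_iff_ne_zero]
    intro h
    exact hdetabs (by rw [← hSS, Matrix.det_mul, h, mul_zero])
  have hdetD : IsUnit D.det := by
    rw [isUnit_iff_ne_zero]
    intro h
    exact hdetabs (by rw [← hDD, Matrix.det_mul, h, mul_zero])
  have hP1i : P1 * P1⁻¹ = 1 := Matrix.mul_nonsing_inv _ hP1inv
  have hSinv : S⁻¹ = D * P1⁻¹ :=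
    Matrix.inv_eq_right_inv (by rw [← Matrix.mul_assoc, hSD, hP1i])
  have hDinv : D⁻¹ = S * P1⁻¹ :=
    Matrix.inv_eq_right_inv (by rw [← Matrix.mul_assoc, hDS, hP1i])
  have hDPS : D * P1⁻¹ * S = 1 := by
    rw [← hSinv]
    exact Matrix.nonsing_inv_mul _ hdetS
  have hSPD : S * P1⁻¹ * D = 1 := by
    rw [← hDinv]
    exact Matrix.nonsing_inv_mul _ hdetD
  have hP1iT : (P1⁻¹)ᵀ = P1⁻¹ := by rw [Matrix.transpose_nonsing_inv, hPT]
  have hSigInv : Sig⁻¹ = (2 : ℝ)⁻¹ • Matrix.fromBlocks (-P1⁻¹) 1 P1⁻¹ 1 := by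
    apply Matrix.inv_eq_right_inv
    rw [hSig, Matrix.mul_smul, Matrix.fromBlocks_multiply]
    have h11 : -P1 * -P1⁻¹ + P1 * P1⁻¹ = (2 : ℝ) • (1 : Matrix (Fin d) (Fin d) ℝ) := by
      rw [neg_mul_neg, hP1i, two_smul]
    have h12 : -P1 * 1 + P1 * 1 = (0 : Matrix (Fin d) (Fin d) ℝ) := by simp
    have h21 : (1 : Matrix (Fin d) (Fin d) ℝ) * -P1⁻¹ + 1 * P1⁻¹ = 0 := by simp
    have h22 : (1 : Matrix (Fin d) (Fin d) ℝ) * 1 + 1 * 1 = (2 : ℝ) • 1 := by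
      rw [Matrix.one_mul, two_smul]
    rw [h11, h12, h21, h22]
    rw [show ((2 : ℝ) • (1 : Matrix (Fin d) (Fin d) ℝ)) = (2 : ℝ) • 1 from rfl]
    rw [show Matrix.fromBlocks ((2 : ℝ) • (1 : Matrix (Fin d) (Fin d) ℝ)) 0 0
        ((2 : ℝ) • (1 : Matrix (Fin d) (Fin d) ℝ))
        = (2 : ℝ) • Matrix.fromBlocks (1 : Matrix (Fin d) (Fin d) ℝ) 0 0 1 from by
      rw [Matrix.fromBlocks_smul]; simp]
    rw [smul_smul, Matrix.fromBlocks_one]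
    norm_num
  have hWSig : ∀ W1 W2 : Matrix (Fin d) (Fin d) ℝ,
      Matrix.fromCols W1 W2 * Sig⁻¹
        = (2 : ℝ)⁻¹ • Matrix.fromCols ((W2 - W1) * P1⁻¹) (W1 + W2) := by
    intro W1 W2
    rw [hSigInv, Matrix.mul_smul, Matrix.fromCols_mul_fromBlocks]
    congr 1
    refine (Matrix.fromCols_ext_iff _ _ _ _).mpr ⟨by noncomm_ring, by simp⟩
  have hG : ∀ W1 W2 : Matrix (Fin d) (Fin d) ℝ,
      Matrix.fromCols W1 W2 * Sig⁻¹ * J * (Matrix.fromCols W1 W2 * Sig⁻¹)ᵀ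
        = (4 : ℝ)⁻¹ • ((W1 + W2) * (P1⁻¹ * (W2 - W1)ᵀ)
            + (W2 - W1) * P1⁻¹ * (W1 + W2)ᵀ) := by
    intro W1 W2
    rw [hWSig, hJ]
    rw [Matrix.smul_mul, Matrix.fromCols_mul_fromBlocks]
    simp only [Matrix.mul_zero, Matrix.mul_one, zero_add, add_zero]
    rw [Matrix.transpose_smul, Matrix.transpose_fromCols]
    rw [Matrix.smul_mul, Matrix.mul_smul, Matrix.fromCols_mul_fromRows, smul_smul]
    rw [Matrix.transpose_mul, hP1iT]
    rw [show ((2 : ℝ)⁻¹ * (2 : ℝ)⁻¹) = (4 : ℝ)⁻¹ by norm_num]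
  have key : ∀ M K : Matrix (Fin d) (Fin d) ℝ,
      (K * Matrix.fromCols (Qm - M * Qp) (Qp - M * Qm)) * Sig⁻¹ * J
          * ((K * Matrix.fromCols (Qm - M * Qp) (Qp - M * Qm)) * Sig⁻¹)ᵀ
        = (2 : ℝ)⁻¹ • (K * (1 - M * Mᵀ) * Kᵀ) := by
    intro M K
    rw [Matrix.mul_fromCols, hG]
    have e1 : K * (Qm - M * Qp) + K * (Qp - M * Qm) = K * ((1 - M) * S) := by
      rw [hSdef]; noncomm_ring
    have e2 : K * (Qp - M * Qm) - K * (Qm - M * Qp) = K * ((1 + M) * D) := by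
      rw [hDdef]; noncomm_ring
    rw [e1, e2]
    have e3 : (K * ((1 + M) * D))ᵀ = D * ((1 + Mᵀ) * Kᵀ) := by
      rw [Matrix.transpose_mul, Matrix.transpose_mul, hDT, Matrix.transpose_add,
        Matrix.transpose_one, Matrix.mul_assoc]
    have e4 : (K * ((1 - M) * S))ᵀ = S * ((1 - Mᵀ) * Kᵀ) := by
      rw [Matrix.transpose_mul, Matrix.transpose_mul, hST, Matrix.transpose_sub,
        Matrix.transpose_one, Matrix.mul_assoc]
    rw [e3, e4]
    have e5 : K * ((1 - M) * S) * (P1⁻¹ * (D * ((1 + Mᵀ) * Kᵀ)))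
        = K * ((1 - M) * (S * P1⁻¹ * D) * (1 + Mᵀ)) * Kᵀ := by noncomm_ring
    have e6 : K * ((1 + M) * D) * P1⁻¹ * (S * ((1 - Mᵀ) * Kᵀ))
        = K * ((1 + M) * (D * P1⁻¹ * S) * (1 - Mᵀ)) * Kᵀ := by noncomm_ring
    rw [e5, e6, hSPD, hDPS]
    have e7 : K * ((1 - M) * 1 * (1 + Mᵀ)) * Kᵀ + K * ((1 + M) * 1 * (1 - Mᵀ)) * Kᵀ
        = (2 : ℝ) • (K * (1 - M * Mᵀ) * Kᵀ) := by
      rw [two_smul]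
      noncomm_ring
    rw [e7, smul_smul]
    congr 1
    norm_num
  have hrank : ∀ M K : Matrix (Fin d) (Fin d) ℝ, IsUnit K.det →
      (K * Matrix.fromCols (Qm - M * Qp) (Qp - M * Qm)).rank = d := by
    intro M K hK
    apply rank_eq_of_posDef_mul
    have hWWT : K * Matrix.fromCols (Qm - M * Qp) (Qp - M * Qm)
        * (K * Matrix.fromCols (Qm - M * Qp) (Qp - M * Qm))ᵀ
        = K * (absP1 + M * absP1 * Mᵀ) * Kᵀ := by
      rw [Matrix.transpose_mul, Matrix.transpose_fromCols]
      rw [show K * Matrix.fromCols (Qm - M * Qp) (Qp - M * Qm)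
          * (Matrix.fromRows (Qm - M * Qp)ᵀ (Qp - M * Qm)ᵀ * Kᵀ)
          = K * (Matrix.fromCols (Qm - M * Qp) (Qp - M * Qm)
              * Matrix.fromRows (Qm - M * Qp)ᵀ (Qp - M * Qm)ᵀ) * Kᵀ from by
        simp only [Matrix.mul_assoc]]
      rw [Matrix.fromCols_mul_fromRows]
      congr 2
      rw [Matrix.transpose_sub, Matrix.transpose_sub, Matrix.transpose_mul,
        Matrix.transpose_mul, hQpT, hQmT]
      have expand : (Qm - M * Qp) * (Qm - Qp * Mᵀ) + (Qp - M * Qm) * (Qp - Qm * Mᵀ)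
          = (Qp * Qp + Qm * Qm) + M * (Qp * Qp + Qm * Qm) * Mᵀ
            - ((Qm * Qp) * Mᵀ + M * (Qp * Qm) + (Qp * Qm) * Mᵀ + M * (Qm * Qp)) := by
        noncomm_ring
      rw [expand, hQpQm, hQmQp, hQQ]
      simp
    rw [hWWT]
    have hpsdM : (M * absP1 * Mᵀ).PosSemidef := conj_psd habs.posSemidef M
    exact conj_posDef (habs.add_posSemidef hpsdM) hK
  refine ⟨⟨?_, ?_⟩, ?_⟩
  · rintro ⟨hrk, hpsd⟩
    obtain ⟨W1, hW1def⟩ : ∃ X, X = W.toCols₁ := ⟨_, rfl⟩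
    obtain ⟨W2, hW2def⟩ : ∃ X, X = W.toCols₂ := ⟨_, rfl⟩
    have hW : W = Matrix.fromCols W1 W2 := by
      rw [hW1def, hW2def, Matrix.fromCols_toCols]
    obtain ⟨A, hAdef⟩ : ∃ X, X = (W2 - W1) * D⁻¹ := ⟨_, rfl⟩
    obtain ⟨B, hBdef⟩ : ∃ X, X = (W1 + W2) * S⁻¹ := ⟨_, rfl⟩
    have hAD : A * D = W2 - W1 := by
      rw [hAdef]; exact Matrix.nonsing_inv_mul_cancel_right _ _ hdetD
    have hBS : B * S = W1 + W2 := by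
      rw [hBdef]; exact Matrix.nonsing_inv_mul_cancel_right _ _ hdetS
    have hG2 : W * Sig⁻¹ * J * (W * Sig⁻¹)ᵀ = (4 : ℝ)⁻¹ • (B * Aᵀ + A * Bᵀ) := by
      rw [hW, hG, ← hAD, ← hBS]
      congr 1
      have e1 : B * S * (P1⁻¹ * (A * D)ᵀ) = B * (S * P1⁻¹ * D) * Aᵀ := by
        rw [Matrix.transpose_mul, hDT]; noncomm_ring
      have e2 : A * D * P1⁻¹ * (B * S)ᵀ = A * (D * P1⁻¹ * S) * Bᵀ := by
        rw [Matrix.transpose_mul, hST]; noncomm_ring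
      rw [e1, e2, hSPD, hDPS, Matrix.mul_one, Matrix.mul_one]
    have hker : ∀ v : Fin d → ℝ, (A + B)ᵀ *ᵥ v = 0 → v = 0 := by
      intro v hv
      have hABv : Aᵀ *ᵥ v = -(Bᵀ *ᵥ v) := by
        have h0 : Aᵀ *ᵥ v + Bᵀ *ᵥ v = 0 := by
          rw [← Matrix.add_mulVec, ← Matrix.transpose_add]
          exact hv
        exact eq_neg_of_add_eq_zero_left h0
      have hq := hpsd.dotProduct_mulVec_nonneg v
      rw [star_trivial, hG2, Matrix.smul_mulVec, dotProduct_smul,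
        Matrix.add_mulVec, dotProduct_add] at hq
      have e1 : v ⬝ᵥ (B * Aᵀ) *ᵥ v = (Bᵀ *ᵥ v) ⬝ᵥ (Aᵀ *ᵥ v) := by
        rw [← Matrix.mulVec_mulVec, Matrix.dotProduct_mulVec, ← Matrix.mulVec_transpose]
      have e2 : v ⬝ᵥ (A * Bᵀ) *ᵥ v = (Aᵀ *ᵥ v) ⬝ᵥ (Bᵀ *ᵥ v) := by
        rw [← Matrix.mulVec_mulVec, Matrix.dotProduct_mulVec, ← Matrix.mulVec_transpose]
      rw [e1, e2, hABv] at hq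
      rw [dotProduct_neg, neg_dotProduct, smul_eq_mul] at hq
      have hself : (0 : ℝ) ≤ (Bᵀ *ᵥ v) ⬝ᵥ (Bᵀ *ᵥ v) :=
        Finset.sum_nonneg fun i _ => mul_self_nonneg _
      have hBv : Bᵀ *ᵥ v = 0 := by
        apply dotProduct_self_eq_zero.mp
        nlinarith
      have hAv : Aᵀ *ᵥ v = 0 := by rw [hABv, hBv, neg_zero]
      have h1 : (W1 + W2)ᵀ *ᵥ v = 0 := by
        rw [← hBS, Matrix.transpose_mul, ← Matrix.mulVec_mulVec, hBv, Matrix.mulVec_zero]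
      have h2 : (W2 - W1)ᵀ *ᵥ v = 0 := by
        rw [← hAD, Matrix.transpose_mul, ← Matrix.mulVec_mulVec, hAv, Matrix.mulVec_zero]
      have hW1v : W1ᵀ *ᵥ v = 0 := by
        have e : W1ᵀ = (2 : ℝ)⁻¹ • ((W1 + W2)ᵀ - (W2 - W1)ᵀ) := by
          rw [Matrix.transpose_add, Matrix.transpose_sub]
          module
        rw [e, Matrix.smul_mulVec, Matrix.sub_mulVec, h1, h2]
        simp
      have hW2v : W2ᵀ *ᵥ v = 0 := by
        have e : W2ᵀ = (2 : ℝ)⁻¹ • ((W1 + W2)ᵀ + (W2 - W1)ᵀ) := by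
          rw [Matrix.transpose_add, Matrix.transpose_sub]
          module
        rw [e, Matrix.smul_mulVec, Matrix.add_mulVec, h1, h2]
        simp
      apply ker_eq_zero_of_rank hrk
      rw [hW, Matrix.transpose_fromCols, Matrix.fromRows_mulVec, hW1v, hW2v]
      ext (i | i) <;> simp
    obtain ⟨K, hKdef⟩ : ∃ X, X = (2 : ℝ)⁻¹ • (A + B) := ⟨_, rfl⟩
    have hKdet : IsUnit K.det := by
      rw [isUnit_iff_ne_zero]
      intro h0
      have hdetT : Kᵀ.det = 0 := by rw [Matrix.det_transpose]; exact h0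
      obtain ⟨v, hv, hv0⟩ := Matrix.exists_mulVec_eq_zero_iff.mpr hdetT
      apply hv
      apply hker
      have e : Kᵀ *ᵥ v = (2 : ℝ)⁻¹ • ((A + B)ᵀ *ᵥ v) := by
        rw [hKdef, Matrix.transpose_smul, Matrix.smul_mulVec]
      rw [e] at hv0
      rcases smul_eq_zero.mp hv0 with h | h
      · norm_num at h
      · exact h
    obtain ⟨M, hMdef⟩ : ∃ X, X = K⁻¹ * ((2 : ℝ)⁻¹ • (A - B)) := ⟨_, rfl⟩
    have hKM : K * M = (2 : ℝ)⁻¹ • (A - B) := by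
      rw [hMdef]; exact Matrix.mul_nonsing_inv_cancel_left _ _ hKdet
    have hWeq : W = K * Matrix.fromCols (Qm - M * Qp) (Qp - M * Qm) := by
      rw [Matrix.mul_fromCols]
      have hw1 : K * (Qm - M * Qp) = W1 := by
        have e : K * (Qm - M * Qp) = K * Qm - (K * M) * Qp := by
          rw [Matrix.mul_sub, ← Matrix.mul_assoc]
        rw [e, hKM, hKdef, Matrix.smul_mul, Matrix.smul_mul, ← smul_sub]
        have e3 : (A + B) * Qm - (A - B) * Qp = B * S - A * D := by
          rw [hSdef, hDdef]; noncomm_ring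
        rw [e3, hBS, hAD]
        module
      have hw2 : K * (Qp - M * Qm) = W2 := by
        have e : K * (Qp - M * Qm) = K * Qp - (K * M) * Qm := by
          rw [Matrix.mul_sub, ← Matrix.mul_assoc]
        rw [e, hKM, hKdef, Matrix.smul_mul, Matrix.smul_mul, ← smul_sub]
        have e3 : (A + B) * Qp - (A - B) * Qm = A * D + B * S := by
          rw [hSdef, hDdef]; noncomm_ring
        rw [e3, hBS, hAD]
        module
      rw [hw1, hw2, hW]
    have hpsd' := hpsd
    rw [hWeq, key M K] at hpsd'
    have hpsdN : (1 - M * Mᵀ).PosSemidef :=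
      (conj_psd_iff hKdet).mp ((psd_smul_iff (by norm_num : (0:ℝ) < 2⁻¹)).mp hpsd')
    have hMle : specNorm M ≤ 1 := by
      have := (specNorm_le_one_iff Mᵀ).mpr (by rwa [Matrix.transpose_transpose])
      rwa [specNorm_transpose] at this
    exact ⟨M, K, hMle, hKdet, hWeq⟩
  · rintro ⟨M, K, hM, hK, hWeq⟩
    constructor
    · rw [hWeq]; exact hrank M K hK
    · rw [hWeq, key M K]
      apply (psd_smul_iff (by norm_num : (0:ℝ) < 2⁻¹)).mpr
      apply (conj_psd_iff hK).mpr
      have := (specNorm_le_one_iff Mᵀ).mp (by rwa [specNorm_transpose])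
      rwa [Matrix.transpose_transpose] at this
  · intro M K hM hK hWeq
    rw [hWeq, key M K]
    rw [posdef_smul_iff (by norm_num : (0:ℝ) < 2⁻¹), conj_posDef_iff hK]
    constructor
    · intro h
      have := (specNorm_lt_one_iff Mᵀ).mpr (by rwa [Matrix.transpose_transpose])
      rwa [specNorm_transpose] at this
    · intro h
      have := (specNorm_lt_one_iff Mᵀ).mp (by rwa [specNorm_transpose])
      rwa [Matrix.transpose_transpose] at this

end
end

section
/- Let a < b be reals and let v : [a,b] → ℝ^d belong to H¹ with derivative v' = g. Then 2·∫_a^b ⟨P₁·g(x), v(x)⟩ dx = ‖Q₊v(b) + Q₋v(a)‖² − ‖Q₊v(a) + Q₋v(b)‖², where ‖·‖ is the Euclidean norm on ℝ^d. -/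
open Matrix MeasureTheory

noncomputable section

/-- The Euclidean norm of a vector in `ℝ^d`. -/
def euclNorm {d : ℕ} (x : Fin d → ℝ) : ℝ :=
  ‖(WithLp.equiv 2 (Fin d → ℝ)).symm x‖


lemma matmul_zero_of_trace {d : ℕ} (M : Matrix (Fin d) (Fin d) ℝ)
    (h : Matrix.trace (M * Mᵀ) = 0) : M = 0 := by
  have hsum : ∑ i, ∑ j, (M i j) ^ 2 = 0 := by
    rw [← h]; simp [Matrix.trace, Matrix.mul_apply, Matrix.diag, sq]
  ext i j
  have h1 := (Finset.sum_eq_zero_iff_of_nonneg (fun i _ => Finset.sum_nonneg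
    (fun j _ => sq_nonneg (M i j)))).1 hsum i (Finset.mem_univ i)
  have h2 := (Finset.sum_eq_zero_iff_of_nonneg (fun j _ => sq_nonneg (M i j))).1 h1 j
    (Finset.mem_univ j)
  simpa using sq_eq_zero_iff.mp h2

lemma QpQm_zero {d : ℕ} {P1 absP1 Qp Qm : Matrix (Fin d) (Fin d) ℝ}
    (habs2 : absP1 ^ 2 = P1 ^ 2)
    (hQp : Qp.PosSemidef) (hQp2 : Qp ^ 2 = (2 : ℝ)⁻¹ • (absP1 + P1))
    (hQm : Qm.PosSemidef) (hQm2 : Qm ^ 2 = (2 : ℝ)⁻¹ • (absP1 - P1)) :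
    Qp * Qm = 0 := by
  have hQps : Qpᵀ = Qp := by
    rw [← Matrix.conjTranspose_eq_transpose_of_trivial]; exact hQp.1
  have hQms : Qmᵀ = Qm := by
    rw [← Matrix.conjTranspose_eq_transpose_of_trivial]; exact hQm.1
  apply matmul_zero_of_trace
  have h1 : (Qp * Qm)ᵀ = Qm * Qp := by rw [Matrix.transpose_mul, hQps, hQms]
  rw [h1]
  have h2 : Qp * Qm * (Qm * Qp) = Qp * (Qm ^ 2) * Qp := by
    simp [pow_two, Matrix.mul_assoc]
  rw [h2, Matrix.trace_mul_cycle, ← pow_two, hQp2, hQm2]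
  have h3 : ((2 : ℝ)⁻¹ • (absP1 + P1)) * ((2 : ℝ)⁻¹ • (absP1 - P1))
      = ((2 : ℝ)⁻¹ * (2 : ℝ)⁻¹) • (absP1 * absP1 - absP1 * P1 + P1 * absP1 - P1 * P1) := by
    rw [Matrix.smul_mul, Matrix.mul_smul, smul_smul]
    congr 1
    rw [Matrix.mul_sub, Matrix.add_mul, Matrix.add_mul]
    abel
  rw [h3, Matrix.trace_smul]
  have h4 : absP1 * absP1 = P1 * P1 := by
    have := habs2; rwa [pow_two, pow_two] at this
  rw [h4, Matrix.trace_sub, Matrix.trace_add, Matrix.trace_sub,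
    Matrix.trace_mul_comm absP1 P1]
  simp

lemma ibp_aux {a b : ℝ} {p q : ℝ → ℝ}
    (hp : MeasureTheory.IntegrableOn p (Set.Ioc a b))
    (hq : MeasureTheory.IntegrableOn q (Set.Ioc a b)) :
    (∫ x in Set.Ioc a b, p x * ∫ s in Set.Ioc a x, q s)
      + (∫ x in Set.Ioc a b, q x * ∫ s in Set.Ioc a x, p s)
    = (∫ x in Set.Ioc a b, p x) * (∫ x in Set.Ioc a b, q x) := by
  set μ := MeasureTheory.volume.restrict (Set.Ioc a b) with hμ
  have hI : MeasurableSet (Set.Ioc a b) := measurableSet_Ioc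
  have hS1 : MeasurableSet {z : ℝ × ℝ | z.2 ≤ z.1} :=
    measurableSet_le measurable_snd measurable_fst
  have hS2 : MeasurableSet {z : ℝ × ℝ | z.2 ≤ z.1}ᶜ := hS1.compl
  have hF : Integrable (fun z : ℝ × ℝ => p z.1 * q z.2) (μ.prod μ) := hp.mul_prod hq
  have hG : Integrable (fun z : ℝ × ℝ => q z.1 * p z.2) (μ.prod μ) := hq.mul_prod hp
  have hA : (∫ x in Set.Ioc a b, p x * ∫ s in Set.Ioc a x, q s)
      = ∫ z, ({z : ℝ × ℝ | z.2 ≤ z.1}.indicator (fun z => p z.1 * q z.2)) z ∂(μ.prod μ) := by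
    have key := MeasureTheory.integral_integral
      (f := fun x s : ℝ => ({z : ℝ × ℝ | z.2 ≤ z.1}.indicator (fun z => p z.1 * q z.2)) (x, s))
      (μ := μ) (ν := μ) (by exact hF.indicator hS1)
    rw [show (∫ z, ({z : ℝ × ℝ | z.2 ≤ z.1}.indicator (fun z => p z.1 * q z.2)) z ∂(μ.prod μ))
      = ∫ x, ∫ s, ({z : ℝ × ℝ | z.2 ≤ z.1}.indicator (fun z => p z.1 * q z.2)) (x, s) ∂μ ∂μ
      from key.symm]
    apply MeasureTheory.integral_congr_ae
    filter_upwards [MeasureTheory.ae_restrict_mem hI] with x hx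
    have hset : Set.Iic x ∩ Set.Ioc a b = Set.Ioc a x := by
      ext s
      simp only [Set.mem_inter_iff, Set.mem_Iic, Set.mem_Ioc]
      constructor
      · rintro ⟨h1, h2, _⟩; exact ⟨h2, h1⟩
      · rintro ⟨h1, h2⟩; exact ⟨h2, h1, h2.trans hx.2⟩
    have : (∫ s in Set.Ioc a x, q s)
        = ∫ s, (Set.Iic x).indicator q s ∂μ := by
      rw [MeasureTheory.integral_indicator measurableSet_Iic, hμ,
        MeasureTheory.Measure.restrict_restrict measurableSet_Iic, hset]
    rw [this, ← MeasureTheory.integral_const_mul]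
    apply MeasureTheory.integral_congr_ae
    filter_upwards with s
    by_cases h : s ≤ x <;>
      simp [Set.indicator_apply, h]
  have hB : (∫ x in Set.Ioc a b, q x * ∫ s in Set.Ioc a x, p s)
      = ∫ z, (({z : ℝ × ℝ | z.2 ≤ z.1}ᶜ).indicator (fun z => p z.1 * q z.2)) z ∂(μ.prod μ) := by
    have hB1 : (∫ x in Set.Ioc a b, q x * ∫ s in Set.Ioc a x, p s)
        = ∫ z, ({z : ℝ × ℝ | z.2 < z.1}.indicator (fun z => q z.1 * p z.2)) z ∂(μ.prod μ) := by
      have hS2' : MeasurableSet {z : ℝ × ℝ | z.2 < z.1} :=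
        measurableSet_lt measurable_snd measurable_fst
      have key := MeasureTheory.integral_integral
        (f := fun x s : ℝ => ({z : ℝ × ℝ | z.2 < z.1}.indicator (fun z => q z.1 * p z.2)) (x, s))
        (μ := μ) (ν := μ) (by exact hG.indicator hS2')
      rw [show (∫ z, ({z : ℝ × ℝ | z.2 < z.1}.indicator (fun z => q z.1 * p z.2)) z ∂(μ.prod μ))
        = ∫ x, ∫ s, ({z : ℝ × ℝ | z.2 < z.1}.indicator (fun z => q z.1 * p z.2)) (x, s) ∂μ ∂μ
        from key.symm]
      apply MeasureTheory.integral_congr_ae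
      filter_upwards [MeasureTheory.ae_restrict_mem hI] with x hx
      have hset : Set.Iio x ∩ Set.Ioc a b = Set.Ioo a x := by
        ext s
        simp only [Set.mem_inter_iff, Set.mem_Iio, Set.mem_Ioc, Set.mem_Ioo]
        constructor
        · rintro ⟨h1, h2, _⟩; exact ⟨h2, h1⟩
        · rintro ⟨h1, h2⟩; exact ⟨h2, h1, (le_of_lt h2).trans hx.2⟩
      have : (∫ s in Set.Ioc a x, p s)
          = ∫ s, (Set.Iio x).indicator p s ∂μ := by
        rw [MeasureTheory.integral_indicator measurableSet_Iio, hμ,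
          MeasureTheory.Measure.restrict_restrict measurableSet_Iio, hset,
          ← MeasureTheory.integral_Ioc_eq_integral_Ioo]
      rw [this, ← MeasureTheory.integral_const_mul]
      apply MeasureTheory.integral_congr_ae
      filter_upwards with s
      by_cases h : s < x <;>
        simp [Set.indicator_apply, h]
    rw [hB1, ← MeasureTheory.integral_prod_swap]
    apply MeasureTheory.integral_congr_ae
    filter_upwards with z
    rcases z with ⟨x, s⟩
    by_cases h : s ≤ x
    · simp [Set.indicator_apply, h, not_lt.mpr h]
    · simp [Set.indicator_apply, h, not_le.mp h, mul_comm]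
  rw [hA, hB, ← MeasureTheory.integral_add (hF.indicator hS1) (hF.indicator hS2)]
  have : (fun z => ({z : ℝ × ℝ | z.2 ≤ z.1}.indicator (fun z => p z.1 * q z.2)) z
      + (({z : ℝ × ℝ | z.2 ≤ z.1}ᶜ).indicator (fun z => p z.1 * q z.2)) z)
      = fun z : ℝ × ℝ => p z.1 * q z.2 := by
    funext z
    exact congrFun (Set.indicator_self_add_compl {z : ℝ × ℝ | z.2 ≤ z.1}
      (fun z => p z.1 * q z.2)) z
  rw [this, MeasureTheory.integral_prod_mul]

/-- **Boundary-energy identity (Theorem 2.4, "moreover" part).**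
For `v ∈ H¹([a,b]; ℝ^d)` with derivative `g`,
`2 ∫_a^b ⟨P₁ g(x), v(x)⟩ dx = ‖Q₊v(b) + Q₋v(a)‖² − ‖Q₊v(a) + Q₋v(b)‖²`. -/
theorem stmt_2 {d : ℕ} (P1 absP1 Qp Qm : Matrix (Fin d) (Fin d) ℝ)
    (hP1symm : P1.IsSymm) (hP1inv : IsUnit P1.det)
    (habs : absP1.PosDef) (habs2 : absP1 ^ 2 = P1 ^ 2)
    (hQp : Qp.PosSemidef) (hQp2 : Qp ^ 2 = (2 : ℝ)⁻¹ • (absP1 + P1))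
    (hQm : Qm.PosSemidef) (hQm2 : Qm ^ 2 = (2 : ℝ)⁻¹ • (absP1 - P1))
    (a b : ℝ) (hab : a < b)
    (v g : ℝ → Fin d → ℝ)
    (hv : ContinuousOn v (Set.Icc a b))
    (hg : MemLp g 2 (volume.restrict (Set.Ioc a b)))
    (hvg : ∀ x ∈ Set.Icc a b, v x = v a + ∫ s in a..x, g s) :
    2 * ∫ x in a..b, (P1.mulVec (g x)) ⬝ᵥ (v x) =
      euclNorm (Qp.mulVec (v b) + Qm.mulVec (v a)) ^ 2 -
        euclNorm (Qp.mulVec (v a) + Qm.mulVec (v b)) ^ 2 := by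
  have hab' : a ≤ b := hab.le
  have hI : MeasurableSet (Set.Ioc a b) := measurableSet_Ioc
  have hsub : Set.Ioc a b ⊆ Set.Icc a b := Set.Ioc_subset_Icc_self
  have hgInt : IntegrableOn g (Set.Ioc a b) := hg.integrable one_le_two
  have hgi : ∀ j, IntegrableOn (fun x => g x j) (Set.Ioc a b) := by
    intro j
    have := (ContinuousLinearMap.proj (R := ℝ) (φ := fun _ : Fin d => ℝ) j).integrable_comp hgInt
    simpa [IntegrableOn] using this
  have hpi : ∀ i, IntegrableOn (fun x => P1.mulVec (g x) i) (Set.Ioc a b) := by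
    intro i
    have : (fun x => P1.mulVec (g x) i) = fun x => ∑ j, P1 i j * g x j := by
      funext x; simp [Matrix.mulVec, dotProduct]
    rw [this]
    exact integrable_finset_sum _ (fun j _ => (hgi j).const_mul _)
  have hvci : ∀ i, ContinuousOn (fun x => v x i) (Set.Icc a b) :=
    fun i => (continuous_apply i).comp_continuousOn hv
  have hwci : ∀ i, ContinuousOn (fun x => P1.mulVec (v x) i) (Set.Icc a b) := by
    intro i
    have : (fun x => P1.mulVec (v x) i) = fun x => ∑ j, P1 i j * v x j := by
      funext x; simp [Matrix.mulVec, dotProduct]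
    rw [this]
    exact continuousOn_finset_sum _ (fun j _ => continuousOn_const.mul (hvci j))
  -- bounded-times-integrable products
  have hbm : ∀ (f u : ℝ → ℝ), IntegrableOn f (Set.Ioc a b) → ContinuousOn u (Set.Icc a b) →
      IntegrableOn (fun x => f x * u x) (Set.Ioc a b) := by
    intro f u hf hu
    have hm : AEStronglyMeasurable u (volume.restrict (Set.Ioc a b)) :=
      (hu.mono hsub).aestronglyMeasurable hI
    obtain ⟨C, hC⟩ := isCompact_Icc.exists_bound_of_continuousOn hu
    have hb : ∀ᵐ x ∂(volume.restrict (Set.Ioc a b)), ‖u x‖ ≤ C := by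
      filter_upwards [ae_restrict_mem hI] with x hx
      exact hC x (hsub hx)
    have := hf.bdd_mul hm hb
    simpa [IntegrableOn, mul_comm] using this
  -- primitives componentwise
  have hGc_eq : ∀ i, ∀ x ∈ Set.Icc a b,
      (∫ s in Set.Ioc a x, g s i) = v x i - v a i := by
    intro i x hx
    have h1 := congrFun (hvg x hx) i
    have h2 : (∫ s in a..x, g s) = ∫ s in Set.Ioc a x, g s :=
      intervalIntegral.integral_of_le hx.1
    have h3 : (∫ s in Set.Ioc a x, g s) i = ∫ s in Set.Ioc a x, g s i := by
      have := (ContinuousLinearMap.proj (R := ℝ) (φ := fun _ : Fin d => ℝ) i).integral_comp_comm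
        (hgInt.mono_set (Set.Ioc_subset_Ioc_right hx.2))
      simpa using this.symm
    have : v x i = v a i + (∫ s in a..x, g s) i := by
      rw [h1]; simp
    rw [h2, h3] at this
    linarith
  have hPc_eq : ∀ i, ∀ x ∈ Set.Icc a b,
      (∫ s in Set.Ioc a x, P1.mulVec (g s) i) = P1.mulVec (v x) i - P1.mulVec (v a) i := by
    intro i x hx
    have h1 : (∫ s in Set.Ioc a x, P1.mulVec (g s) i)
        = ∑ j, P1 i j * ∫ s in Set.Ioc a x, g s j := by
      have e : (fun s => P1.mulVec (g s) i) = fun s => ∑ j, P1 i j * g s j := by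
        funext s; simp [Matrix.mulVec, dotProduct]
      rw [e, MeasureTheory.integral_finset_sum _ (fun j _ =>
        ((hgi j).mono_set (Set.Ioc_subset_Ioc_right hx.2)).const_mul _)]
      simp [MeasureTheory.integral_const_mul]
    rw [h1]
    have h2 : ∀ j, (∫ s in Set.Ioc a x, g s j) = v x j - v a j := fun j => hGc_eq j x hx
    simp only [h2]
    simp [Matrix.mulVec, dotProduct, mul_sub, Finset.sum_sub_distrib]
  have hGcc : ∀ i, ContinuousOn (fun x => ∫ s in Set.Ioc a x, g s i) (Set.Icc a b) :=
    fun i => ContinuousOn.congr ((hvci i).sub continuousOn_const) (fun x hx => hGc_eq i x hx)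
  have hPcc : ∀ i, ContinuousOn (fun x => ∫ s in Set.Ioc a x, P1.mulVec (g s) i) (Set.Icc a b) :=
    fun i => ContinuousOn.congr ((hwci i).sub continuousOn_const) (fun x hx => hPc_eq i x hx)
  -- symmetry of the bilinear form
  have hsymmdot : ∀ (u w : Fin d → ℝ), P1.mulVec u ⬝ᵥ w = u ⬝ᵥ P1.mulVec w := by
    intro u w
    have : u ⬝ᵥ P1.mulVec w = P1ᵀ.mulVec u ⬝ᵥ w := by
      rw [Matrix.dotProduct_mulVec, Matrix.mulVec_transpose]
    rw [this, hP1symm.eq]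
  -- main computation for the LHS
  have hE1 : (∫ x in Set.Ioc a b, P1.mulVec (g x) ⬝ᵥ v x)
      = ∑ i, (v a i * (∫ x in Set.Ioc a b, P1.mulVec (g x) i)
        + ∫ x in Set.Ioc a b, P1.mulVec (g x) i * ∫ s in Set.Ioc a x, g s i) := by
    have e : ∀ x, P1.mulVec (g x) ⬝ᵥ v x = ∑ i, P1.mulVec (g x) i * v x i := fun x => rfl
    simp only [e]
    rw [MeasureTheory.integral_finset_sum _ (fun i _ => hbm _ _ (hpi i) (hvci i))]
    refine Finset.sum_congr rfl fun i _ => ?_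
    have hsplit : (∫ x in Set.Ioc a b, P1.mulVec (g x) i * v x i)
        = ∫ x in Set.Ioc a b,
            (P1.mulVec (g x) i * v a i + P1.mulVec (g x) i * ∫ s in Set.Ioc a x, g s i) := by
      apply MeasureTheory.integral_congr_ae
      filter_upwards [ae_restrict_mem hI] with x hx
      have h := hGc_eq i x (hsub hx)
      have hxv : v x i = v a i + ∫ s in Set.Ioc a x, g s i := by linarith
      rw [hxv]; ring
    rw [hsplit, MeasureTheory.integral_add ((hpi i).mul_const _)
      (hbm _ _ (hpi i) (hGcc i)), MeasureTheory.integral_mul_const]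
    ring
  have hE2 : (∫ x in Set.Ioc a b, P1.mulVec (g x) ⬝ᵥ v x)
      = ∑ i, (P1.mulVec (v a) i * (∫ x in Set.Ioc a b, g x i)
        + ∫ x in Set.Ioc a b, g x i * ∫ s in Set.Ioc a x, P1.mulVec (g s) i) := by
    have e : ∀ x, P1.mulVec (g x) ⬝ᵥ v x = ∑ i, g x i * P1.mulVec (v x) i := by
      intro x; rw [hsymmdot]; rfl
    simp only [e]
    rw [MeasureTheory.integral_finset_sum _ (fun i _ => hbm _ _ (hgi i) (hwci i))]
    refine Finset.sum_congr rfl fun i _ => ?_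
    have hsplit : (∫ x in Set.Ioc a b, g x i * P1.mulVec (v x) i)
        = ∫ x in Set.Ioc a b,
            (g x i * P1.mulVec (v a) i + g x i * ∫ s in Set.Ioc a x, P1.mulVec (g s) i) := by
      apply MeasureTheory.integral_congr_ae
      filter_upwards [ae_restrict_mem hI] with x hx
      have h := hPc_eq i x (hsub hx)
      have hxv : P1.mulVec (v x) i = P1.mulVec (v a) i
          + ∫ s in Set.Ioc a x, P1.mulVec (g s) i := by linarith
      rw [hxv]; ring
    rw [hsplit, MeasureTheory.integral_add ((hgi i).mul_const _)
      (hbm _ _ (hgi i) (hPcc i)), MeasureTheory.integral_mul_const]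
    ring
  have hbIcc : b ∈ Set.Icc a b := ⟨hab', le_rfl⟩
  have hLHS : 2 * (∫ x in Set.Ioc a b, P1.mulVec (g x) ⬝ᵥ v x)
      = P1.mulVec (v b) ⬝ᵥ v b - P1.mulVec (v a) ⬝ᵥ v a := by
    have key : 2 * (∫ x in Set.Ioc a b, P1.mulVec (g x) ⬝ᵥ v x)
        = ∑ i, (P1.mulVec (v b) i * v b i - P1.mulVec (v a) i * v a i) := by
      rw [two_mul]
      nth_rewrite 1 [hE1]
      nth_rewrite 1 [hE2]
      rw [← Finset.sum_add_distrib]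
      refine Finset.sum_congr rfl fun i _ => ?_
      have hib := ibp_aux (hpi i) (hgi i)
      have hPb : (∫ x in Set.Ioc a b, P1.mulVec (g x) i)
          = P1.mulVec (v b) i - P1.mulVec (v a) i := hPc_eq i b hbIcc
      have hGb : (∫ x in Set.Ioc a b, g x i) = v b i - v a i := hGc_eq i b hbIcc
      rw [hPb, hGb] at hib ⊢
      linear_combination hib
    rw [key, Finset.sum_sub_distrib]
    rfl
  -- matrix algebra for the RHS
  have hQps : Qpᵀ = Qp := by
    rw [← Matrix.conjTranspose_eq_transpose_of_trivial]; exact hQp.1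
  have hQms : Qmᵀ = Qm := by
    rw [← Matrix.conjTranspose_eq_transpose_of_trivial]; exact hQm.1
  have hQpQm : Qp * Qm = 0 := QpQm_zero habs2 hQp hQp2 hQm hQm2
  have hQmQp : Qm * Qp = 0 := by
    have := congrArg Matrix.transpose hQpQm
    rwa [Matrix.transpose_mul, hQps, hQms, Matrix.transpose_zero] at this
  have hcross : ∀ (A B : Matrix (Fin d) (Fin d) ℝ), Aᵀ = A → ∀ x y : Fin d → ℝ,
      (A.mulVec x) ⬝ᵥ (B.mulVec y) = x ⬝ᵥ ((A * B).mulVec y) := by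
    intro A B hA x y
    have h1 : x ⬝ᵥ A.mulVec (B.mulVec y) = Aᵀ.mulVec x ⬝ᵥ B.mulVec y := by
      rw [Matrix.dotProduct_mulVec, Matrix.mulVec_transpose]
    rw [← Matrix.mulVec_mulVec, h1, hA]
  have hnorm : ∀ x : Fin d → ℝ, euclNorm x ^ 2 = x ⬝ᵥ x := by
    intro x
    rw [euclNorm, EuclideanSpace.norm_eq, Real.sq_sqrt (by positivity)]
    simp [dotProduct, WithLp.equiv_symm_apply, Real.norm_eq_abs, sq_abs, sq]
  have hdiff : Qp * Qp - Qm * Qm = P1 := by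
    have e1 : Qp * Qp = Qp ^ 2 := (pow_two Qp).symm
    have e2 : Qm * Qm = Qm ^ 2 := (pow_two Qm).symm
    rw [e1, e2, hQp2, hQm2]
    module
  rw [intervalIntegral.integral_of_le hab', hLHS, hnorm, hnorm]
  rw [add_dotProduct, add_dotProduct, dotProduct_add,
    dotProduct_add, dotProduct_add, dotProduct_add]
  rw [hcross Qp Qp hQps, hcross Qp Qm hQps, hcross Qm Qp hQms, hcross Qm Qm hQms,
    hcross Qp Qp hQps, hcross Qp Qm hQps, hcross Qm Qp hQms, hcross Qm Qm hQms]
  rw [hQpQm, hQmQp]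
  simp only [Matrix.zero_mulVec, dotProduct_zero]
  have hQmQm : Qm * Qm = Qp * Qp - P1 := by rw [← hdiff]; abel
  rw [hQmQm]
  simp only [Matrix.sub_mulVec, dotProduct_sub]
  rw [dotProduct_comm (P1.mulVec (v b)) (v b),
    dotProduct_comm (P1.mulVec (v a)) (v a)]
  ring

end
end

section
/- Let H₀ ∈ ℝ^{d×d} be symmetric, positive semidefinite and invertible (hence positive definite), and let Q₁ ∈ ℝ^{d×d} be symmetric and invertible. Then sup_{t ∈ ℝ} ‖exp(i·t·Q₁·H₀)‖ < ∞, where exp denotes the matrix exponential of the complex matrix i·t·Q₁·H₀ and ‖·‖ is the spectral norm. -/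
open Matrix

noncomputable section

/-- The spectral (ℓ²-operator) norm of a square complex matrix. -/
def specNormC {d : ℕ} (A : Matrix (Fin d) (Fin d) ℂ) : ℝ :=
  ‖Matrix.toEuclideanCLM (𝕜 := ℂ) A‖

lemma map_isHermitian {d : ℕ} {M : Matrix (Fin d) (Fin d) ℝ} (h : M.IsSymm) :
    (M.map Complex.ofReal).IsHermitian := by
  ext i j
  simp only [Matrix.conjTranspose_apply, Matrix.map_apply, RCLike.star_def, Complex.conj_ofReal]
  exact_mod_cast congrFun (congrFun h i) j

lemma norm_exp_smul_hermitian_le_one {d : ℕ} (t : ℝ) {M : Matrix (Fin d) (Fin d) ℂ}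
    (hM : M.IsHermitian) :
    specNormC (NormedSpace.exp ((Complex.I * (t : ℂ)) • M)) ≤ 1 := by
  set X := (Complex.I * (t : ℂ)) • M with hX
  have hstar : Xᴴ = -X := by
    rw [hX, Matrix.conjTranspose_smul, hM]
    rw [show star (Complex.I * (t : ℂ)) = -(Complex.I * t) by
      simp [Complex.star_def, Complex.conj_I, Complex.conj_ofReal]]
    module
  set E := NormedSpace.exp X with hE
  have hmul : star E * E = 1 := by
    rw [hE, Matrix.star_eq_conjTranspose, ← Matrix.exp_conjTranspose, hstar]
    rw [← Matrix.exp_add_of_commute (-X) X (Commute.neg_left rfl)]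
    simp [NormedSpace.exp_zero]
  have h2 : specNormC E ^ 2 ≤ 1 := by
    have := CStarRing.norm_star_mul_self (x := Matrix.toEuclideanCLM (𝕜 := ℂ) E)
    have h1 : star (Matrix.toEuclideanCLM (𝕜 := ℂ) E) * Matrix.toEuclideanCLM (𝕜 := ℂ) E = 1 := by
      rw [← map_star, ← _root_.map_mul, hmul, _root_.map_one]
    rw [h1] at this
    calc specNormC E ^ 2
        = ‖Matrix.toEuclideanCLM (𝕜 := ℂ) E‖ * ‖Matrix.toEuclideanCLM (𝕜 := ℂ) E‖ := sq _
      _ = ‖(1 : EuclideanSpace ℂ (Fin d) →L[ℂ] EuclideanSpace ℂ (Fin d))‖ := this.symm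
      _ ≤ 1 := ContinuousLinearMap.norm_id_le
  nlinarith [norm_nonneg (Matrix.toEuclideanCLM (𝕜 := ℂ) E), h2]

/-- **Proposition 4.1.** For `H₀` symmetric positive semidefinite and invertible
and `Q₁` symmetric invertible, `sup_{t ∈ ℝ} ‖exp(i t Q₁ H₀)‖ < ∞`. -/
theorem stmt_4 {d : ℕ} (H0 Q1 : Matrix (Fin d) (Fin d) ℝ)
    (hH0 : H0.PosSemidef) (hH0inv : IsUnit H0.det)
    (hQ1 : Q1.IsSymm) (hQ1inv : IsUnit Q1.det) :
    ∃ C : ℝ, ∀ t : ℝ,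
      specNormC (NormedSpace.exp
        ((Complex.I * (t : ℂ)) • ((Q1.map Complex.ofReal) * (H0.map Complex.ofReal)))) ≤ C := by
  classical
  set S := (open scoped MatrixOrder in CFC.sqrt H0) with hSdef
  have hSS : S * S = H0 := by
    open scoped MatrixOrder in exact CFC.sqrt_mul_sqrt_self H0 hH0.nonneg
  have hSdet : IsUnit S.det := by
    have h : IsUnit (S.det * S.det) := by rw [← Matrix.det_mul, hSS]; exact hH0inv
    exact isUnit_of_mul_isUnit_left h
  have hSsymm : S.IsSymm := by
    have h : S.IsHermitian := by
      open scoped MatrixOrder in exact (CFC.sqrt_nonneg H0).posSemidef.isHermitian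
    ext i j
    simpa using congrFun (congrFun h i) j
  set R := S.map Complex.ofReal with hRdef
  set A := H0.map Complex.ofReal with hAdef
  set B := Q1.map Complex.ofReal with hBdef
  have hmap : ∀ X Y : Matrix (Fin d) (Fin d) ℝ,
      (X * Y).map Complex.ofReal = X.map Complex.ofReal * Y.map Complex.ofReal := by
    intro X Y
    ext i j
    simp only [Matrix.map_apply, Matrix.mul_apply]
    push_cast
    ring
  have hRR : R * R = A := by rw [hRdef, hAdef, ← hmap, hSS]
  have hRdet : IsUnit R.det := by
    have h1 := hSdet.map Complex.ofRealHom
    rw [RingHom.map_det] at h1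
    exact h1
  have hRu : IsUnit R := (Matrix.isUnit_iff_isUnit_det R).mpr hRdet
  set U := hRu.unit with hUdef
  have hU : (U : Matrix (Fin d) (Fin d) ℂ) = R := hRu.unit_spec
  have hRHerm : Rᴴ = R := map_isHermitian hSsymm
  have hBHerm : Bᴴ = B := map_isHermitian hQ1
  set M := R * B * R with hMdef
  have hMHerm : M.IsHermitian := by
    rw [Matrix.IsHermitian, hMdef, Matrix.conjTranspose_mul, Matrix.conjTranspose_mul,
      hRHerm, hBHerm]
    rw [mul_assoc]
  have hconj : ∀ t : ℝ, (Complex.I * (t : ℂ)) • (B * A) =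
      (↑U⁻¹ : Matrix (Fin d) (Fin d) ℂ) * ((Complex.I * (t : ℂ)) • M) * U := by
    intro t
    have key : (↑U⁻¹ : Matrix (Fin d) (Fin d) ℂ) * M * U = B * A := by
      have h1 : (↑U⁻¹ : Matrix (Fin d) (Fin d) ℂ) * M = B * R := by
        rw [hMdef, ← hU, mul_assoc]
        exact Units.inv_mul_cancel_left U (B * R)
      rw [h1, hU, mul_assoc, hRR]
    rw [Matrix.mul_smul, Matrix.smul_mul, key]
  set T := Matrix.toEuclideanCLM (𝕜 := ℂ) (n := Fin d)
  refine ⟨‖T ↑U⁻¹‖ * ‖T ↑U‖, fun t => ?_⟩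
  rw [hconj t, Matrix.exp_units_conj' U]
  set E := NormedSpace.exp ((Complex.I * (t : ℂ)) • M) with hEdef
  have hE1 : specNormC E ≤ 1 := norm_exp_smul_hermitian_le_one t hMHerm
  have hnorm : specNormC ((↑U⁻¹ : Matrix (Fin d) (Fin d) ℂ) * E * (↑U : Matrix (Fin d) (Fin d) ℂ)) ≤
      ‖T ↑U⁻¹‖ * specNormC E * ‖T ↑U‖ := by
    unfold specNormC
    rw [_root_.map_mul, _root_.map_mul]
    calc ‖T ↑U⁻¹ * T E * T ↑U‖ ≤ ‖T ↑U⁻¹ * T E‖ * ‖T ↑U‖ := norm_mul_le _ _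
    _ ≤ ‖T ↑U⁻¹‖ * ‖T E‖ * ‖T ↑U‖ :=
       mul_le_mul_of_nonneg_right (norm_mul_le _ _) (norm_nonneg _)
  refine hnorm.trans ?_
  have h0 : (0:ℝ) ≤ ‖T ↑U⁻¹‖ := norm_nonneg _
  have h1 : (0:ℝ) ≤ ‖T ↑U‖ := norm_nonneg _
  have key : ‖T ↑U⁻¹‖ * specNormC E * ‖T ↑U‖ ≤ ‖T ↑U⁻¹‖ * 1 * ‖T ↑U‖ :=
    mul_le_mul_of_nonneg_right (mul_le_mul_of_nonneg_left hE1 h0) h1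
  rw [mul_one] at key
  exact key

end
end

section
/- Define f : ℝ → ℂ by f(t) := 1 + (e^{it} + e^{i√2·t})/2. Then: (1) f(t) ≠ 0 for every t ∈ ℝ; and (2) inf_{t ∈ ℝ} |f(t)| = 0, i.e. for every ε > 0 there exists t ∈ ℝ with |f(t)| < ε. -/
open Complex Real

/-- `exp (I * t) = -1` iff `t` is an odd multiple of `π`. -/
lemma exp_I_eq_neg_one {t : ℝ} (h : Complex.exp (Complex.I * t) = -1) :
    ∃ n : ℤ, t = (2 * n + 1) * π := by
  have h1 : Complex.exp (Complex.I * t - π * Complex.I) = 1 := by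
    rw [Complex.exp_sub, h, Complex.exp_pi_mul_I]
    norm_num
  rw [Complex.exp_eq_one_iff] at h1
  obtain ⟨n, hn⟩ := h1
  refine ⟨n, ?_⟩
  have : ((t : ℂ)) = (((2 * n + 1) * π : ℝ) : ℂ) := by
    push_cast
    linear_combination (-Complex.I) * hn + ((t:ℂ) - 2*n*π - π) * Complex.I_sq
  exact_mod_cast this

/-- The subgroup `ℤ√2 + ℤ` of `ℝ`. -/
def S2 : AddSubgroup ℝ where
  carrier := {x | ∃ k m : ℤ, x = k * Real.sqrt 2 + m}
  zero_mem' := ⟨0, 0, by norm_num⟩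
  add_mem' := by
    rintro a b ⟨k, m, rfl⟩ ⟨k', m', rfl⟩
    exact ⟨k + k', m + m', by push_cast; ring⟩
  neg_mem' := by
    rintro a ⟨k, m, rfl⟩
    exact ⟨-k, -m, by push_cast; ring⟩

lemma S2_dense : Dense (S2 : Set ℝ) := by
  apply S2.dense_of_not_isolated_zero
  intro ε hε
  obtain ⟨n, hn⟩ := exists_nat_gt (1 / ε)
  have hn0 : 0 < n := by
    by_contra hc
    push_neg at hc
    interval_cases n
    simp at hn
    nlinarith [one_div_pos.mpr hε]
  obtain ⟨j, k, hk0, hkn, hjk⟩ := Real.exists_int_int_abs_mul_sub_le (Real.sqrt 2) hn0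
  have hne : (k : ℝ) * Real.sqrt 2 - j ≠ 0 := by
    intro hc
    have hk : (k : ℝ) ≠ 0 := Int.cast_ne_zero.mpr hk0.ne'
    have : Real.sqrt 2 = (j : ℝ) / (k : ℝ) := by field_simp; linarith [sub_eq_zero.mp hc]
    exact irrational_sqrt_two ⟨(j : ℚ) / (k : ℚ), by push_cast; rw [this]⟩
  have hlt : |(k : ℝ) * Real.sqrt 2 - j| < ε := by
    have h1 : (1 : ℝ) / (n + 1) < ε := by
      rw [div_lt_iff₀ (by positivity)]
      rw [div_lt_iff₀ hε] at hn
      nlinarith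
    linarith
  refine ⟨|(k : ℝ) * Real.sqrt 2 - j|, ?_, abs_pos.mpr hne, hlt⟩
  rcases abs_choice ((k : ℝ) * Real.sqrt 2 - j) with h | h <;> rw [h]
  · exact ⟨k, -j, by push_cast; ring⟩
  · exact ⟨-k, j, by push_cast; ring⟩

set_option maxHeartbeats 1000000 in
/-- **Example 4.3.** For `f(t) = 1 + (e^{it} + e^{i√2 t})/2`:
(1) `f(t) ≠ 0` for all real `t`, and (2) `inf_{t ∈ ℝ} |f(t)| = 0`. -/
theorem stmt_5 :
    (∀ t : ℝ,
      (1 : ℂ) + (Complex.exp (Complex.I * t) + Complex.exp (Complex.I * (Real.sqrt 2 * t))) / 2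
        ≠ 0) ∧
    (∀ ε : ℝ, 0 < ε → ∃ t : ℝ,
      ‖(1 : ℂ) +
        (Complex.exp (Complex.I * t) + Complex.exp (Complex.I * (Real.sqrt 2 * t))) / 2‖ < ε) := by
  constructor
  · -- Part (1): f(t) ≠ 0
    intro t hf
    set a := Complex.exp (Complex.I * t) with ha
    set b := Complex.exp (Complex.I * (Real.sqrt 2 * t)) with hb
    have hsum : a + b = -2 := by
      have := hf
      field_simp at this
      linear_combination this
    have habs_a : ‖a‖ = 1 := by
      rw [ha, Complex.norm_exp]; simp
    have habs_b : ‖b‖ = 1 := by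
      rw [hb, Complex.norm_exp]; simp
    -- from the sum and unit moduli, a = b = -1
    have hre : a.re + b.re = -2 := by
      have := congrArg Complex.re hsum; simpa using this
    have hra : a.re ≥ -1 := by
      have := Complex.abs_re_le_norm a; rw [habs_a] at this
      cases' abs_le.mp this with h1 h2; linarith
    have hrb : b.re ≥ -1 := by
      have := Complex.abs_re_le_norm b; rw [habs_b] at this
      cases' abs_le.mp this with h1 h2; linarith
    have hra' : a.re = -1 := by linarith
    have hrb' : b.re = -1 := by linarith
    have hia : a.im = 0 := by
      have := Complex.sq_norm a
      rw [habs_a, Complex.normSq_apply, hra'] at this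
      nlinarith
    have hib : b.im = 0 := by
      have := Complex.sq_norm b
      rw [habs_b, Complex.normSq_apply, hrb'] at this
      nlinarith
    have ha1 : a = -1 := Complex.ext (by simp [hra']) (by simp [hia])
    have hb1 : b = -1 := Complex.ext (by simp [hrb']) (by simp [hib])
    have ea : Complex.exp (Complex.I * t) = -1 := by rw [← ha]; exact ha1
    have eb : Complex.exp (Complex.I * ((Real.sqrt 2 * t : ℝ) : ℂ)) = -1 := by
      push_cast; rw [← hb]; exact hb1
    obtain ⟨n, hn⟩ := exp_I_eq_neg_one ea
    obtain ⟨m, hm⟩ := exp_I_eq_neg_one eb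
    rw [hn] at hm
    have hπ : (0:ℝ) < π := Real.pi_pos
    have h2n : (2 * (n:ℝ) + 1) ≠ 0 := by
      intro hc
      have : (2 * n + 1 : ℤ) = 0 := by exact_mod_cast hc
      omega
    have hs : Real.sqrt 2 = ((2 * m + 1 : ℤ) : ℝ) / ((2 * n + 1 : ℤ) : ℝ) := by
      push_cast
      field_simp
      nlinarith [hm]
    exact irrational_sqrt_two ⟨((2 * m + 1 : ℤ) : ℚ) / ((2 * n + 1 : ℤ) : ℚ), by
      push_cast; rw [hs]; push_cast; ring⟩
  · -- Part (2): inf |f| = 0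
    intro ε hε
    have hπ : (0:ℝ) < π := Real.pi_pos
    set c : ℝ := (1 - Real.sqrt 2) / 2 with hc
    set δ : ℝ := min (ε / (4 * π)) (1 / (4 * π)) with hδ
    have hδpos : 0 < δ := by
      apply lt_min <;> positivity
    obtain ⟨s, hsS, hds⟩ := Metric.mem_closure_iff.mp (S2_dense c) δ hδpos
    obtain ⟨k, m, rfl⟩ := hsS
    -- use t = (2k+1)π
    refine ⟨(2 * k + 1) * π, ?_⟩
    set d : ℝ := 2 * π * ((k : ℝ) * Real.sqrt 2 + m - c) with hd
    have hdist : |(k : ℝ) * Real.sqrt 2 + m - c| < δ := by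
      rw [Real.dist_eq, abs_sub_comm] at hds
      exact hds
    have hdbound : |d| < 2 * π * δ := by
      rw [hd, abs_mul, abs_of_pos (by positivity : (0:ℝ) < 2 * π)]
      exact (mul_lt_mul_iff_right₀ (by positivity)).mpr hdist
    have hd1 : |d| ≤ 1 := by
      have : 2 * π * δ ≤ 2 * π * (1 / (4 * π)) :=
        (mul_le_mul_iff_right₀ (by positivity)).mpr (min_le_right _ _)
      have h2 : 2 * π * (1 / (4 * π)) = 1 / 2 := by field_simp; ring
      linarith
    have hdε : |d| < ε := by
      have : 2 * π * δ ≤ 2 * π * (ε / (4 * π)) :=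
        (mul_le_mul_iff_right₀ (by positivity)).mpr (min_le_left _ _)
      have h2 : 2 * π * (ε / (4 * π)) = ε / 2 := by field_simp; ring
      linarith
    push_cast
    -- first exponential equals -1
    have hexp1 : Complex.exp (Complex.I * ((2 * (k:ℂ) + 1) * (π:ℂ))) = -1 := by
      have h1 : Complex.I * ((2 * (k:ℂ) + 1) * (π:ℂ)) = ((2 * k + 1 : ℤ) : ℂ) * (π * Complex.I) := by
        push_cast; ring
      rw [h1, Complex.exp_int_mul, Complex.exp_pi_mul_I]
      exact (odd_two_mul_add_one k).neg_one_zpow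
    -- second exponential equals -exp(I d)
    have hr : Real.sqrt 2 * ((2 * (k:ℝ) + 1) * π) = (2 * (-(m:ℝ)) + 1) * π + d := by
      rw [hd, hc]; ring
    have hexp2 : Complex.exp (Complex.I * ((Real.sqrt 2 : ℂ) * ((2 * (k:ℂ) + 1) * (π:ℂ)))) =
        -Complex.exp (Complex.I * (d : ℂ)) := by
      have key : Complex.I * ((Real.sqrt 2 : ℂ) * ((2 * (k:ℂ) + 1) * (π:ℂ))) =
          ((2 * (-m) + 1 : ℤ) : ℂ) * (π * Complex.I) + Complex.I * (d : ℝ) := by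
        have h2 := congrArg (fun x : ℝ => Complex.I * (x : ℂ)) hr
        push_cast at h2 ⊢
        linear_combination h2
      rw [key, Complex.exp_add, Complex.exp_int_mul, Complex.exp_pi_mul_I,
        (odd_two_mul_add_one (-m)).neg_one_zpow]
      ring
    rw [hexp1, hexp2]
    have heq : (1 : ℂ) + (-1 + -Complex.exp (Complex.I * d)) / 2 =
        -(Complex.exp (Complex.I * d) - 1) / 2 := by ring
    rw [heq]
    rw [norm_div, norm_neg]
    have hb := Complex.norm_exp_sub_one_le (x := Complex.I * d) (by
      rw [norm_mul, Complex.norm_I, one_mul, Complex.norm_real, Real.norm_eq_abs]; exact hd1)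
    rw [norm_mul, Complex.norm_I, one_mul, Complex.norm_real, Real.norm_eq_abs] at hb
    have h2abs : ‖(2 : ℂ)‖ = 2 := by norm_num
    rw [h2abs]
    linarith
end

section
/- Let a < b be reals and let M ∈ ℝ^{d×d}. Then for every y ∈ ℝ^d there exists a function v : [a,b] → ℝ^d belonging to H¹ such that Q₊v(b) + Q₋v(a) = y and Q₊v(a) + Q₋v(b) = M·y. In particular, the trace map v ↦ Q₊v(b) + Q₋v(a), restricted to H¹ functions satisfying the boundary condition Q₊v(a) + Q₋v(b) = M(Q₊v(b) + Q₋v(a)), is onto ℝ^d. -/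
open Matrix MeasureTheory

noncomputable section

private lemma aux_trace_zero {d : ℕ} (A : Matrix (Fin d) (Fin d) ℝ)
    (h : (Aᵀ * A).trace = 0) : A = 0 := by
  ext i j
  have hnn : ∀ k ∈ Finset.univ, 0 ≤ ((Aᵀ * A) : Matrix (Fin d) (Fin d) ℝ) k k := by
    intro k _
    simp only [Matrix.mul_apply, Matrix.transpose_apply]
    exact Finset.sum_nonneg fun l _ => mul_self_nonneg _
  have h0 : ∀ k ∈ Finset.univ, ((Aᵀ * A) : Matrix (Fin d) (Fin d) ℝ) k k = 0 :=
    (Finset.sum_eq_zero_iff_of_nonneg hnn).mp h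
  have hj := h0 j (Finset.mem_univ j)
  simp only [Matrix.mul_apply, Matrix.transpose_apply] at hj
  have := (Finset.sum_eq_zero_iff_of_nonneg
    (fun l _ => mul_self_nonneg (A l j))).mp hj i (Finset.mem_univ i)
  simpa [Matrix.zero_apply] using mul_self_eq_zero.mp this

/-- **Lemma 5.3.** For every `y ∈ ℝ^d` there is an `H¹` function
`v : [a,b] → ℝ^d` with `Q₊v(b) + Q₋v(a) = y` and `Q₊v(a) + Q₋v(b) = My`;
in particular the trace map `v ↦ Q₊v(b) + Q₋v(a)`, restricted to `H¹` functions
satisfying the boundary condition `Q₊v(a) + Q₋v(b) = M(Q₊v(b) + Q₋v(a))`,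
is onto `ℝ^d`. -/
theorem stmt_6 {d : ℕ} (P1 absP1 Qp Qm : Matrix (Fin d) (Fin d) ℝ)
    (hP1symm : P1.IsSymm) (hP1inv : IsUnit P1.det)
    (habs : absP1.PosDef) (habs2 : absP1 ^ 2 = P1 ^ 2)
    (hQp : Qp.PosSemidef) (hQp2 : Qp ^ 2 = (2 : ℝ)⁻¹ • (absP1 + P1))
    (hQm : Qm.PosSemidef) (hQm2 : Qm ^ 2 = (2 : ℝ)⁻¹ • (absP1 - P1))
    (a b : ℝ) (hab : a < b)
    (M : Matrix (Fin d) (Fin d) ℝ) (y : Fin d → ℝ) :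
    ∃ v g : ℝ → Fin d → ℝ,
      ContinuousOn v (Set.Icc a b) ∧
      MemLp g 2 (volume.restrict (Set.Ioc a b)) ∧
      (∀ x ∈ Set.Icc a b, v x = v a + ∫ s in a..x, g s) ∧
      Qp.mulVec (v b) + Qm.mulVec (v a) = y ∧
      Qp.mulVec (v a) + Qm.mulVec (v b) = M.mulVec y := by
  have hQpT : Qpᵀ = Qp := by
    have := hQp.1; rwa [Matrix.IsHermitian, Matrix.conjTranspose_eq_transpose_of_trivial] at this
  have hQmT : Qmᵀ = Qm := by
    have := hQm.1; rwa [Matrix.IsHermitian, Matrix.conjTranspose_eq_transpose_of_trivial] at this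
  have hQp2' : Qp * Qp = (2 : ℝ)⁻¹ • (absP1 + P1) := by rw [← sq, hQp2]
  have hQm2' : Qm * Qm = (2 : ℝ)⁻¹ • (absP1 - P1) := by rw [← sq, hQm2]
  have habs2' : absP1 * absP1 = P1 * P1 := by rw [← sq, ← sq, habs2]
  -- Qp * Qm = 0
  have hQpQm : Qp * Qm = 0 := by
    apply aux_trace_zero
    have ht : ((Qp * Qm)ᵀ * (Qp * Qm)).trace = ((Qp * Qp) * (Qm * Qm)).trace := by
      rw [Matrix.transpose_mul, hQpT, hQmT]
      rw [show Qm * Qp * (Qp * Qm) = Qm * (Qp * Qp * Qm) by noncomm_ring]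
      rw [Matrix.trace_mul_comm]
      congr 1; noncomm_ring
    rw [ht, hQp2', hQm2']
    simp only [Matrix.smul_mul, Matrix.mul_smul, smul_smul, Matrix.add_mul, Matrix.mul_sub,
      Matrix.trace_smul, Matrix.trace_sub, Matrix.trace_add, smul_eq_mul]
    rw [habs2', Matrix.trace_mul_comm absP1 P1]
    ring
  have hQmQp : Qm * Qp = 0 := by
    have := congrArg Matrix.transpose hQpQm
    rwa [Matrix.transpose_mul, hQpT, hQmT, Matrix.transpose_zero] at this
  -- auxiliary vanishing products
  have z1 : Qp * (Qm * Qm) = 0 := by rw [← Matrix.mul_assoc, hQpQm, Matrix.zero_mul]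
  have z2 : Qm * (Qp * Qp) = 0 := by rw [← Matrix.mul_assoc, hQmQp, Matrix.zero_mul]
  have z3 : (Qm * Qm) * Qp = 0 := by rw [Matrix.mul_assoc, hQmQp, Matrix.mul_zero]
  have z4 : (Qp * Qp) * Qm = 0 := by rw [Matrix.mul_assoc, hQpQm, Matrix.mul_zero]
  -- absP1 = Qp² + Qm²
  have hsum : Qp * Qp + Qm * Qm = absP1 := by
    rw [hQp2', hQm2']; module
  have hcp : Qp * absP1 = absP1 * Qp := by
    rw [← hsum, Matrix.mul_add, Matrix.add_mul, z1, z3, add_zero, add_zero, Matrix.mul_assoc]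
  have hcm : Qm * absP1 = absP1 * Qm := by
    rw [← hsum, Matrix.mul_add, Matrix.add_mul, z2, z4, zero_add, zero_add, Matrix.mul_assoc]
  have hdet : IsUnit absP1.det := isUnit_iff_ne_zero.mpr habs.det_pos.ne'
  set I := absP1⁻¹ with hI
  have hIl : absP1 * I = 1 := Matrix.mul_nonsing_inv _ hdet
  have hIr : I * absP1 = 1 := Matrix.nonsing_inv_mul _ hdet
  have hcpI : Qp * I = I * Qp := by
    calc Qp * I = I * (absP1 * (Qp * I)) := by rw [← Matrix.mul_assoc, hIr, Matrix.one_mul]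
    _ = I * (Qp * (absP1 * I)) := by rw [← Matrix.mul_assoc absP1, ← hcp, Matrix.mul_assoc]
    _ = I * Qp := by rw [hIl, Matrix.mul_one]
  have hcmI : Qm * I = I * Qm := by
    calc Qm * I = I * (absP1 * (Qm * I)) := by rw [← Matrix.mul_assoc, hIr, Matrix.one_mul]
    _ = I * (Qm * (absP1 * I)) := by rw [← Matrix.mul_assoc absP1, ← hcm, Matrix.mul_assoc]
    _ = I * Qm := by rw [hIl, Matrix.mul_one]
  set Np := I * (Qm + Qp * M) with hNp
  set Nm := I * (Qp + Qm * M) with hNm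
  have key1 : Qp * Nm + Qm * Np = 1 := by
    rw [hNp, hNm, ← Matrix.mul_assoc, ← Matrix.mul_assoc, hcpI, hcmI,
      Matrix.mul_assoc, Matrix.mul_assoc, ← Matrix.mul_add]
    have : Qp * (Qp + Qm * M) + Qm * (Qm + Qp * M) = absP1 := by
      rw [← hsum]
      simp only [Matrix.mul_add, ← Matrix.mul_assoc, hQpQm, hQmQp, Matrix.zero_mul,
        add_zero, zero_add]
    rw [this, hIr]
  have key2 : Qp * Np + Qm * Nm = M := by
    rw [hNp, hNm, ← Matrix.mul_assoc, ← Matrix.mul_assoc, hcpI, hcmI,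
      Matrix.mul_assoc, Matrix.mul_assoc, ← Matrix.mul_add]
    have h2 : Qp * (Qm + Qp * M) + Qm * (Qp + Qm * M) = absP1 * M := by
      rw [← hsum, Matrix.add_mul]
      simp only [Matrix.mul_add, ← Matrix.mul_assoc, hQpQm, hQmQp, Matrix.zero_mul,
        add_zero, zero_add]
    rw [h2, ← Matrix.mul_assoc, hIr, Matrix.one_mul]
  set va := Np.mulVec y with hva
  set vb := Nm.mulVec y with hvb
  set c : Fin d → ℝ := (b - a)⁻¹ • (vb - va) with hc
  have ha' : (fun x : ℝ => va + (x - a) • c) a = va := by simp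
  have hb' : (fun x : ℝ => va + (x - a) • c) b = vb := by
    show va + (b - a) • c = vb
    rw [hc, smul_smul, mul_inv_cancel₀ (sub_ne_zero.mpr hab.ne'), one_smul]
    abel
  refine ⟨fun x => va + (x - a) • c, fun _ => c, ?_, ?_, ?_, ?_, ?_⟩
  · exact (continuous_const.add ((continuous_id.sub continuous_const).smul
      continuous_const)).continuousOn
  · have : IsFiniteMeasure (volume.restrict (Set.Ioc a b)) := by
      constructor
      rw [Measure.restrict_apply_univ, Real.volume_Ioc]
      exact ENNReal.ofReal_lt_top
    exact memLp_const c
  · intro x _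
    rw [ha', intervalIntegral.integral_const]
  · rw [ha', hb', hva, hvb, Matrix.mulVec_mulVec, Matrix.mulVec_mulVec, ← Matrix.add_mulVec,
      key1, Matrix.one_mulVec]
  · rw [ha', hb', hva, hvb, Matrix.mulVec_mulVec, Matrix.mulVec_mulVec, ← Matrix.add_mulVec,
      key2]

end
end

section
/- Let a < b, let c > 0, and let M ∈ ℝ^{d×d} with spectral norm ‖M‖ ≤ 1. Then: (I) the inequality ∫_a^b ⟨P₁·v'(x), v(x)⟩ dx ≥ c·‖v(a)‖² holds for every v ∈ H¹ with Q₊v(a) + Q₋v(b) = M(Q₊v(b) + Q₋v(a)) if and only if ‖y‖² − ‖My‖² ≥ 2c·(n₊(My)² + n₋(y)²) for all y ∈ ℝ^d; (II) the inequality ∫_a^b ⟨P₁·v'(x), v(x)⟩ dx ≥ c·‖v(b)‖² holds for every such v if and only if ‖y‖² − ‖My‖² ≥ 2c·(n₊(y)² + n₋(My)²) for all y ∈ ℝ^d. -/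
open Matrix MeasureTheory

noncomputable section

section Aux
variable {d : ℕ}

lemma real_ct (A : Matrix (Fin d) (Fin d) ℝ) : Aᴴ = Aᵀ := by
  ext i j; simp [Matrix.conjTranspose_apply]

lemma tr_tmul_zero {A : Matrix (Fin d) (Fin d) ℝ} (h : (Aᵀ * A).trace = 0) : A = 0 := by
  have h2 : ∑ j, ∑ i, A i j * A i j = 0 := by
    rw [← h, Matrix.trace]
    simp [Matrix.diag, Matrix.mul_apply]
  have hnn : ∀ j ∈ Finset.univ, (0:ℝ) ≤ ∑ i, A i j * A i j := fun j _ =>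
    Finset.sum_nonneg fun i _ => mul_self_nonneg _
  ext i j
  have hj := (Finset.sum_eq_zero_iff_of_nonneg hnn).mp h2 j (Finset.mem_univ j)
  have := (Finset.sum_eq_zero_iff_of_nonneg
    (fun i _ => mul_self_nonneg (A i j))).mp hj i (Finset.mem_univ i)
  simpa using mul_self_eq_zero.mp this

lemma tmul_self_zero {A : Matrix (Fin d) (Fin d) ℝ} (h : Aᵀ * A = 0) : A = 0 :=
  tr_tmul_zero (by rw [h, Matrix.trace_zero])

/-- If `B` is symmetric, `Q` is PSD, and `B` commutes with `Q * Q`, then `B` commutes with `Q`. -/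
lemma commute_of_commute_sq {Q B : Matrix (Fin d) (Fin d) ℝ} (hQ : Q.PosSemidef)
    (hBs : Bᵀ = B) (h : B * (Q * Q) = (Q * Q) * B) : B * Q = Q * B := by
  have hQs : Qᵀ = Q := by rw [← real_ct]; exact hQ.1
  set D := Q * B - B * Q with hD
  have hDt : Dᵀ = -D := by
    simp [hD, Matrix.transpose_sub, Matrix.transpose_mul, hQs, hBs]
  have hQD : Q * D = -(D * Q) := by
    have h2 : Q * D + D * Q = 0 := by
      have e : Q * D + D * Q = (Q*Q)*B - B*(Q*Q) := by rw [hD]; noncomm_ring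
      rw [e, ← h, sub_self]
    exact eq_neg_of_add_eq_zero_left h2
  have htr : (Q * (D * D)).trace = 0 := by
    have e1 : (Q * (D * D)).trace = ((Q * D) * D).trace := by rw [mul_assoc]
    have e2 : ((Q * D) * D).trace = (D * (Q * D)).trace := Matrix.trace_mul_comm _ _
    have e3 : (D * (Q * D)).trace = -((D * D) * Q).trace := by
      rw [hQD, show D * -(D * Q) = -((D*D)*Q) by noncomm_ring, Matrix.trace_neg]
    have e4 : ((D * D) * Q).trace = (Q * (D * D)).trace := Matrix.trace_mul_comm _ _
    linarith [e1, e2, e3, e4]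
  open scoped MatrixOrder in set R := CFC.sqrt Q with hR
  have hRR : R * R = Q := by open scoped MatrixOrder in exact CFC.sqrt_mul_sqrt_self Q hQ.nonneg
  have hRs : Rᵀ = R := by rw [← real_ct]; open scoped MatrixOrder in exact (CFC.sqrt_nonneg Q).posSemidef.1
  have hDR : D * R = 0 := by
    apply tr_tmul_zero
    have e : (D * R)ᵀ * (D * R) = -(R * ((D * D) * R)) := by
      rw [Matrix.transpose_mul, hDt, hRs]; noncomm_ring
    rw [e, Matrix.trace_neg, Matrix.trace_mul_comm, mul_assoc, hRR,
      Matrix.trace_mul_comm, htr, neg_zero]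
  have hDQ : D * Q = 0 := by rw [← hRR, ← mul_assoc, hDR, Matrix.zero_mul]
  have hQD0 : Q * D = 0 := by rw [hQD, hDQ, neg_zero]
  have hD0 : D = 0 := by
    apply tr_tmul_zero
    have e : Dᵀ * D = -(Q * (B * D)) + B * (Q * D) := by
      rw [hDt, hD]; noncomm_ring
    rw [e, hQD0, Matrix.mul_zero, add_zero, Matrix.trace_neg,
      Matrix.trace_mul_comm, mul_assoc, hDQ, Matrix.mul_zero, Matrix.trace_zero, neg_zero]
  have := sub_eq_zero.mp hD0
  exact this.symm

lemma inv_comm_left {A B : Matrix (Fin d) (Fin d) ℝ} (hA : IsUnit A.det)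
    (h : A * B = B * A) : A⁻¹ * B = B * A⁻¹ := by
  calc A⁻¹ * B = A⁻¹ * B * (A * A⁻¹) := by rw [Matrix.mul_nonsing_inv _ hA, mul_one]
    _ = A⁻¹ * (B * A) * A⁻¹ := by noncomm_ring
    _ = A⁻¹ * (A * B) * A⁻¹ := by rw [h]
    _ = (A⁻¹ * A) * (B * A⁻¹) := by noncomm_ring
    _ = B * A⁻¹ := by rw [Matrix.nonsing_inv_mul _ hA, one_mul]

lemma mulVec_dot (X : Matrix (Fin d) (Fin d) ℝ) (u z : Fin d → ℝ) :
    (X *ᵥ u) ⬝ᵥ z = u ⬝ᵥ (Xᵀ *ᵥ z) := by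
  rw [dotProduct_comm, Matrix.dotProduct_mulVec, Matrix.mulVec_transpose,
    dotProduct_comm]

lemma matrix_facts (P1 absP1 Qp Qm Pp Pm : Matrix (Fin d) (Fin d) ℝ)
    (hP1symm : P1.IsSymm) (hP1inv : IsUnit P1.det)
    (habs : absP1.PosDef) (habs2 : absP1 ^ 2 = P1 ^ 2)
    (hQp : Qp.PosSemidef) (hQp2 : Qp ^ 2 = (2 : ℝ)⁻¹ • (absP1 + P1))
    (hQm : Qm.PosSemidef) (hQm2 : Qm ^ 2 = (2 : ℝ)⁻¹ • (absP1 - P1))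
    (hPp : Pp = (2 : ℝ)⁻¹ • ((1 : Matrix (Fin d) (Fin d) ℝ) + absP1⁻¹ * P1))
    (hPm : Pm = (2 : ℝ)⁻¹ • ((1 : Matrix (Fin d) (Fin d) ℝ) - absP1⁻¹ * P1)) :
    (∀ z, (P1 *ᵥ z) ⬝ᵥ z = (Qp *ᵥ z) ⬝ᵥ (Qp *ᵥ z) - (Qm *ᵥ z) ⬝ᵥ (Qm *ᵥ z)) ∧
    (∀ u w, (Qp *ᵥ u + Qm *ᵥ w) ⬝ᵥ (Qp *ᵥ u + Qm *ᵥ w)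
        = (Qp *ᵥ u) ⬝ᵥ (Qp *ᵥ u) + (Qm *ᵥ w) ⬝ᵥ (Qm *ᵥ w)) ∧
    (∀ u w, ((P1⁻¹ * Pp) *ᵥ (Qp *ᵥ u + Qm *ᵥ w)) ⬝ᵥ (Qp *ᵥ u + Qm *ᵥ w)
        = (Pp *ᵥ u) ⬝ᵥ u) ∧
    (∀ u w, ((P1⁻¹ * Pm) *ᵥ (Qp *ᵥ u + Qm *ᵥ w)) ⬝ᵥ (Qp *ᵥ u + Qm *ᵥ w)
        = -((Pm *ᵥ w) ⬝ᵥ w)) ∧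
    (∀ u, (Pp *ᵥ u) ⬝ᵥ u + (Pm *ᵥ u) ⬝ᵥ u = u ⬝ᵥ u) ∧
    (∀ y1 y2 : Fin d → ℝ, ∃ va vb : Fin d → ℝ,
        Qp *ᵥ vb + Qm *ᵥ va = y1 ∧ Qp *ᵥ va + Qm *ᵥ vb = y2) := by
  have hP1T : P1ᵀ = P1 := hP1symm
  have habsPSD := habs.posSemidef
  have habsT : absP1ᵀ = absP1 := by rw [← real_ct]; exact habsPSD.1
  have habs2' : absP1 * absP1 = P1 * P1 := by
    have := habs2; rwa [pow_two, pow_two] at this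
  have com0 : P1 * absP1 = absP1 * P1 :=
    commute_of_commute_sq habsPSD hP1T (by rw [habs2']; noncomm_ring)
  have hdet_abs : IsUnit absP1.det := isUnit_iff_ne_zero.mpr (ne_of_gt habs.det_pos)
  have hinv_abs_mul : absP1⁻¹ * absP1 = 1 := Matrix.nonsing_inv_mul _ hdet_abs
  have hmul_abs_inv : absP1 * absP1⁻¹ = 1 := Matrix.mul_nonsing_inv _ hdet_abs
  have comIP1 : absP1⁻¹ * P1 = P1 * absP1⁻¹ := inv_comm_left hdet_abs com0.symm
  obtain ⟨S, hS⟩ : ∃ S, S = absP1⁻¹ * P1 := ⟨_, rfl⟩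
  rw [← hS] at hPp hPm
  have hSt : Sᵀ = S := by
    rw [hS, Matrix.transpose_mul, Matrix.transpose_nonsing_inv, habsT, hP1T, ← comIP1]
  have habsS : absP1 * S = P1 := by
    rw [hS, ← mul_assoc, hmul_abs_inv, one_mul]
  have hSabs : S * absP1 = P1 := by
    rw [hS, comIP1, mul_assoc, hinv_abs_mul, mul_one]
  have hSP1 : S * P1 = absP1 := by
    rw [hS, mul_assoc, ← habs2', ← mul_assoc, hinv_abs_mul, one_mul]
  have hP1S : P1 * S = absP1 := by
    rw [hS, comIP1, ← mul_assoc, ← habs2', mul_assoc, hmul_abs_inv, mul_one]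
  have hSS : S * S = 1 := by
    have e1 : absP1 * (S * S) = absP1 := by
      rw [← mul_assoc, habsS, hP1S]
    calc S * S = absP1⁻¹ * (absP1 * (S * S)) := by rw [← mul_assoc, hinv_abs_mul, one_mul]
      _ = 1 := by rw [e1, hinv_abs_mul]
  -- projections
  have hPpPm : Pp + Pm = 1 := by rw [hPp, hPm]; module
  have hPpT : Ppᵀ = Pp := by
    rw [hPp, Matrix.transpose_smul, Matrix.transpose_add, Matrix.transpose_one, hSt]
  have hPmT : Pmᵀ = Pm := by
    rw [hPm, Matrix.transpose_smul, Matrix.transpose_sub, Matrix.transpose_one, hSt]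
  have hPpPm0 : Pp * Pm = 0 := by
    rw [hPp, hPm, Matrix.smul_mul, Matrix.mul_smul]
    rw [show ((1 : Matrix (Fin d) (Fin d) ℝ) + S) * (1 - S) = 1 - S * S by noncomm_ring, hSS]
    simp
  have hPmPp0 : Pm * Pp = 0 := by
    rw [hPp, hPm, Matrix.smul_mul, Matrix.mul_smul]
    rw [show ((1 : Matrix (Fin d) (Fin d) ℝ) - S) * (1 + S) = 1 - S * S by noncomm_ring, hSS]
    simp
  have hPpPp : Pp * Pp = Pp := by
    rw [hPp, Matrix.smul_mul, Matrix.mul_smul]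
    rw [show ((1 : Matrix (Fin d) (Fin d) ℝ) + S) * (1 + S) = 1 + S + S + S * S by noncomm_ring,
      hSS]
    module
  have hPmPm : Pm * Pm = Pm := by
    rw [hPm, Matrix.smul_mul, Matrix.mul_smul]
    rw [show ((1 : Matrix (Fin d) (Fin d) ℝ) - S) * (1 - S) = 1 - S - S + S * S by noncomm_ring,
      hSS]
    module
  -- Q transposes and squares
  have hQpT : Qpᵀ = Qp := by rw [← real_ct]; exact hQp.1
  have hQmT : Qmᵀ = Qm := by rw [← real_ct]; exact hQm.1
  have hQp2' : Qp * Qp = absP1 * Pp := by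
    rw [← pow_two, hQp2, hPp, Matrix.mul_smul, mul_add, mul_one, habsS]
  have hQm2' : Qm * Qm = absP1 * Pm := by
    rw [← pow_two, hQm2, hPm, Matrix.mul_smul, mul_sub, mul_one, habsS]
  -- Qp ⊥ Pm etc.
  have hQpPm0 : Qp * Pm = 0 := by
    apply tmul_self_zero
    rw [Matrix.transpose_mul, hPmT, hQpT]
    calc (Pm * Qp) * (Qp * Pm) = Pm * ((Qp * Qp) * Pm) := by noncomm_ring
      _ = Pm * (absP1 * (Pp * Pm)) := by rw [hQp2', mul_assoc absP1 Pp Pm]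
      _ = 0 := by rw [hPpPm0, mul_zero, mul_zero]
  have hPmQp0 : Pm * Qp = 0 := by
    have h := congrArg Matrix.transpose hQpPm0
    rwa [Matrix.transpose_mul, hPmT, hQpT, Matrix.transpose_zero] at h
  have hQmPp0 : Qm * Pp = 0 := by
    apply tmul_self_zero
    rw [Matrix.transpose_mul, hPpT, hQmT]
    calc (Pp * Qm) * (Qm * Pp) = Pp * ((Qm * Qm) * Pp) := by noncomm_ring
      _ = Pp * (absP1 * (Pm * Pp)) := by rw [hQm2', mul_assoc absP1 Pm Pp]
      _ = 0 := by rw [hPmPp0, mul_zero, mul_zero]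
  have hPpQm0 : Pp * Qm = 0 := by
    have h := congrArg Matrix.transpose hQmPp0
    rwa [Matrix.transpose_mul, hPpT, hQmT, Matrix.transpose_zero] at h
  have hPp1m : Pp = 1 - Pm := by rw [← hPpPm]; noncomm_ring
  have hPm1p : Pm = 1 - Pp := by rw [← hPpPm]; noncomm_ring
  have hQpPp : Qp * Pp = Qp := by rw [hPp1m, mul_sub, mul_one, hQpPm0, sub_zero]
  have hPpQp : Pp * Qp = Qp := by rw [hPp1m, sub_mul, one_mul, hPmQp0, sub_zero]
  have hQmPm : Qm * Pm = Qm := by rw [hPm1p, mul_sub, mul_one, hQmPp0, sub_zero]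
  have hPmQm : Pm * Qm = Qm := by rw [hPm1p, sub_mul, one_mul, hPpQm0, sub_zero]
  have hQpQm0 : Qp * Qm = 0 := by
    apply tmul_self_zero
    rw [Matrix.transpose_mul, hQmT, hQpT]
    calc (Qm * Qp) * (Qp * Qm) = Qm * ((Qp * Qp) * Qm) := by noncomm_ring
      _ = Qm * (absP1 * (Pp * Qm)) := by rw [hQp2', mul_assoc absP1 Pp Qm]
      _ = 0 := by rw [hPpQm0, mul_zero, mul_zero]
  have hQmQp0 : Qm * Qp = 0 := by
    have h := congrArg Matrix.transpose hQpQm0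
    rwa [Matrix.transpose_mul, hQmT, hQpT, Matrix.transpose_zero] at h
  -- commutation of absP1, P1 with Qp, Qm
  have comPpabs : absP1 * Pp = Pp * absP1 := by
    rw [hPp, Matrix.mul_smul, Matrix.smul_mul, mul_add, add_mul, mul_one, one_mul, habsS, hSabs]
  have comPmabs : absP1 * Pm = Pm * absP1 := by
    rw [hPm, Matrix.mul_smul, Matrix.smul_mul, mul_sub, sub_mul, mul_one, one_mul, habsS, hSabs]
  have comPpP1 : P1 * Pp = Pp * P1 := by
    rw [hPp, Matrix.mul_smul, Matrix.smul_mul, mul_add, add_mul, mul_one, one_mul, hP1S, hSP1]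
  have comPmP1 : P1 * Pm = Pm * P1 := by
    rw [hPm, Matrix.mul_smul, Matrix.smul_mul, mul_sub, sub_mul, mul_one, one_mul, hP1S, hSP1]
  have comQpabs : absP1 * Qp = Qp * absP1 := by
    apply commute_of_commute_sq hQp habsT
    rw [hQp2']
    calc absP1 * (absP1 * Pp) = absP1 * (Pp * absP1) := by rw [comPpabs]
      _ = (absP1 * Pp) * absP1 := by rw [mul_assoc]
  have comQmabs : absP1 * Qm = Qm * absP1 := by
    apply commute_of_commute_sq hQm habsT
    rw [hQm2']
    calc absP1 * (absP1 * Pm) = absP1 * (Pm * absP1) := by rw [comPmabs]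
      _ = (absP1 * Pm) * absP1 := by rw [mul_assoc]
  have comQpabsinv : absP1⁻¹ * Qp = Qp * absP1⁻¹ := inv_comm_left hdet_abs comQpabs
  have comQmabsinv : absP1⁻¹ * Qm = Qm * absP1⁻¹ := inv_comm_left hdet_abs comQmabs
  -- P1⁻¹ * Pp and P1⁻¹ * Pm
  have hSPp : S * Pp = Pp := by
    rw [hPp, Matrix.mul_smul, mul_add, mul_one, hSS, add_comm]
  have hSPm : S * Pm = -Pm := by
    rw [hPm, Matrix.mul_smul, mul_sub, mul_one, hSS]
    module
  have hP1absPp : P1 * (absP1⁻¹ * Pp) = Pp := by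
    rw [← mul_assoc, ← comIP1, ← hS, hSPp]
  have hP1absPm : P1 * (absP1⁻¹ * Pm) = -Pm := by
    rw [← mul_assoc, ← comIP1, ← hS, hSPm]
  have hAeq : P1⁻¹ * Pp = absP1⁻¹ * Pp := by
    rw [← hP1absPp, ← mul_assoc, Matrix.nonsing_inv_mul _ hP1inv, one_mul, hP1absPp]
  have hBeq : P1⁻¹ * Pm = -(absP1⁻¹ * Pm) := by
    have e : absP1⁻¹ * Pm = P1⁻¹ * (-Pm) := by
      rw [← hP1absPm, ← mul_assoc, Matrix.nonsing_inv_mul _ hP1inv, one_mul]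
    rw [e, mul_neg, neg_neg]
  -- useful product identities with absP1⁻¹
  have hAQp : (absP1⁻¹ * Pp) * Qp = absP1⁻¹ * Qp := by rw [mul_assoc, hPpQp]
  have hAQm : (absP1⁻¹ * Pp) * Qm = 0 := by rw [mul_assoc, hPpQm0, mul_zero]
  have hBQm : (absP1⁻¹ * Pm) * Qm = absP1⁻¹ * Qm := by rw [mul_assoc, hPmQm]
  have hBQp : (absP1⁻¹ * Pm) * Qp = 0 := by rw [mul_assoc, hPmQp0, mul_zero]
  have habsinvT : (absP1⁻¹)ᵀ = absP1⁻¹ := by rw [Matrix.transpose_nonsing_inv, habsT]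
  have hQpA : (absP1⁻¹ * Qp)ᵀ = absP1⁻¹ * Qp := by
    rw [Matrix.transpose_mul, habsinvT, hQpT, comQpabsinv]
  have hQmB : (absP1⁻¹ * Qm)ᵀ = absP1⁻¹ * Qm := by
    rw [Matrix.transpose_mul, habsinvT, hQmT, comQmabsinv]
  have hQpAQp : (absP1⁻¹ * Qp) * Qp = Pp := by
    rw [mul_assoc, hQp2', ← mul_assoc, hinv_abs_mul, one_mul]
  have hQpAQm : (absP1⁻¹ * Qp) * Qm = 0 := by rw [mul_assoc, hQpQm0, mul_zero]
  have hQmBQm : (absP1⁻¹ * Qm) * Qm = Pm := by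
    rw [mul_assoc, hQm2', ← mul_assoc, hinv_abs_mul, one_mul]
  have hQmBQp : (absP1⁻¹ * Qm) * Qp = 0 := by rw [mul_assoc, hQmQp0, mul_zero]
  refine ⟨?_, ?_, ?_, ?_, ?_, ?_⟩
  · -- F1
    intro z
    have hQQ : Qp * Qp - Qm * Qm = P1 := by
      rw [hQp2', hQm2', ← mul_sub]
      have e : Pp - Pm = S := by rw [hPp, hPm]; module
      rw [e, habsS]
    rw [mulVec_dot Qp, mulVec_dot Qm, hQpT, hQmT, Matrix.mulVec_mulVec, Matrix.mulVec_mulVec,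
      ← dotProduct_sub, ← Matrix.sub_mulVec, hQQ, dotProduct_comm]
  · -- F2
    intro u w
    rw [dotProduct_add, add_dotProduct, add_dotProduct]
    rw [mulVec_dot Qp (u) (Qm *ᵥ w), hQpT, Matrix.mulVec_mulVec, hQpQm0, Matrix.zero_mulVec,
      dotProduct_zero]
    rw [mulVec_dot Qm (w) (Qp *ᵥ u), hQmT, Matrix.mulVec_mulVec, hQmQp0, Matrix.zero_mulVec,
      dotProduct_zero]
    ring
  · -- F3
    intro u w
    rw [hAeq, Matrix.mulVec_add, Matrix.mulVec_mulVec, Matrix.mulVec_mulVec, hAQp, hAQm,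
      Matrix.zero_mulVec, add_zero, dotProduct_add]
    rw [mulVec_dot (absP1⁻¹ * Qp) u (Qp *ᵥ u), hQpA, Matrix.mulVec_mulVec, hQpAQp]
    rw [mulVec_dot (absP1⁻¹ * Qp) u (Qm *ᵥ w), hQpA, Matrix.mulVec_mulVec, hQpAQm,
      Matrix.zero_mulVec, dotProduct_zero, add_zero, dotProduct_comm]
  · -- F4
    intro u w
    rw [hBeq, Matrix.neg_mulVec, Matrix.mulVec_add, Matrix.mulVec_mulVec, Matrix.mulVec_mulVec,
      hBQm, hBQp, Matrix.zero_mulVec, zero_add, neg_dotProduct, neg_inj,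
      dotProduct_add]
    rw [mulVec_dot (absP1⁻¹ * Qm) w (Qp *ᵥ u), hQmB, Matrix.mulVec_mulVec, hQmBQp,
      Matrix.zero_mulVec, dotProduct_zero, zero_add]
    rw [mulVec_dot (absP1⁻¹ * Qm) w (Qm *ᵥ w), hQmB, Matrix.mulVec_mulVec, hQmBQm,
      dotProduct_comm]
  · -- F5
    intro u
    rw [← add_dotProduct, ← Matrix.add_mulVec, hPpPm, Matrix.one_mulVec]
  · -- F6
    intro y1 y2
    have hWW : (Qp + Qm) * (Qp + Qm) = absP1 := by
      rw [add_mul, mul_add, mul_add, hQpQm0, hQmQp0, hQp2', hQm2']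
      rw [show absP1 * Pp + 0 + (0 + absP1 * Pm) = absP1 * (Pp + Pm) by noncomm_ring, hPpPm,
        mul_one]
    have hWdet : IsUnit (Qp + Qm).det := by
      have e : (Qp + Qm).det * (Qp + Qm).det = absP1.det := by rw [← Matrix.det_mul, hWW]
      have : IsUnit ((Qp + Qm).det * (Qp + Qm).det) := by rw [e]; exact hdet_abs
      exact isUnit_of_mul_isUnit_left this
    have comWPp : (Qp + Qm) * Pp = Pp * (Qp + Qm) := by
      rw [add_mul, mul_add, hQpPp, hQmPp0, hPpQp, hPpQm0]
    have comWPm : (Qp + Qm) * Pm = Pm * (Qp + Qm) := by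
      rw [add_mul, mul_add, hQpPm0, hQmPm, hPmQp0, hPmQm]
    have hWinvPp : Pp * (Qp + Qm)⁻¹ = (Qp + Qm)⁻¹ * Pp :=
      (inv_comm_left hWdet comWPp).symm
    have hWinvPm : Pm * (Qp + Qm)⁻¹ = (Qp + Qm)⁻¹ * Pm :=
      (inv_comm_left hWdet comWPm).symm
    have eQp : Qp = (Qp + Qm) * Pp := by rw [add_mul, hQpPp, hQmPp0, add_zero]
    have eQm : Qm = (Qp + Qm) * Pm := by rw [add_mul, hQpPm0, hQmPm, zero_add]
    have hQpWinv : Qp * (Qp + Qm)⁻¹ = Pp := by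
      calc Qp * (Qp + Qm)⁻¹ = ((Qp + Qm) * Pp) * (Qp + Qm)⁻¹ := by rw [← eQp]
        _ = (Qp + Qm) * (Pp * (Qp + Qm)⁻¹) := by rw [mul_assoc]
        _ = (Qp + Qm) * ((Qp + Qm)⁻¹ * Pp) := by rw [hWinvPp]
        _ = ((Qp + Qm) * (Qp + Qm)⁻¹) * Pp := by rw [mul_assoc]
        _ = Pp := by rw [Matrix.mul_nonsing_inv _ hWdet, one_mul]
    have hQmWinv : Qm * (Qp + Qm)⁻¹ = Pm := by
      calc Qm * (Qp + Qm)⁻¹ = ((Qp + Qm) * Pm) * (Qp + Qm)⁻¹ := by rw [← eQm]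
        _ = (Qp + Qm) * (Pm * (Qp + Qm)⁻¹) := by rw [mul_assoc]
        _ = (Qp + Qm) * ((Qp + Qm)⁻¹ * Pm) := by rw [hWinvPm]
        _ = ((Qp + Qm) * (Qp + Qm)⁻¹) * Pm := by rw [mul_assoc]
        _ = Pm := by rw [Matrix.mul_nonsing_inv _ hWdet, one_mul]
    refine ⟨(Qp + Qm)⁻¹ *ᵥ (Pp *ᵥ y2 + Pm *ᵥ y1), (Qp + Qm)⁻¹ *ᵥ (Pp *ᵥ y1 + Pm *ᵥ y2),
      ?_, ?_⟩
    · simp only [Matrix.mulVec_add, Matrix.mulVec_mulVec, ← mul_assoc, hQpWinv, hQmWinv,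
        hPpPp, hPpPm0, hPmPp0, hPmPm, Matrix.zero_mulVec, add_zero, zero_add]
      rw [← Matrix.add_mulVec, hPpPm, Matrix.one_mulVec]
    · simp only [Matrix.mulVec_add, Matrix.mulVec_mulVec, ← mul_assoc, hQpWinv, hQmWinv,
        hPpPp, hPpPm0, hPmPp0, hPmPm, Matrix.zero_mulVec, add_zero, zero_add]
      rw [← Matrix.add_mulVec, hPpPm, Matrix.one_mulVec]

lemma fubini_primitive {a b : ℝ} {f h : ℝ → ℝ}
    (hf : IntegrableOn f (Set.Ioc a b)) (hh : IntegrableOn h (Set.Ioc a b)) :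
    (∫ x in Set.Ioc a b, f x * ∫ t in Set.Ioc a x, h t)
      + (∫ x in Set.Ioc a b, h x * ∫ t in Set.Ioc a x, f t)
      = (∫ x in Set.Ioc a b, f x) * (∫ x in Set.Ioc a b, h x) := by
  set μ := volume.restrict (Set.Ioc a b) with hμ
  have hs : MeasurableSet {q : ℝ × ℝ | q.2 < q.1} :=
    measurableSet_lt measurable_snd measurable_fst
  have stepA : ∀ φ ψ : ℝ → ℝ, IntegrableOn ψ (Set.Ioc a b) →
      (∫ x, (∫ t, ({q : ℝ × ℝ | q.2 < q.1}).indicator (fun q => φ q.1 * ψ q.2) (x, t) ∂μ) ∂μ)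
        = ∫ x in Set.Ioc a b, φ x * ∫ t in Set.Ioc a x, ψ t := by
    intro φ ψ hψ
    apply integral_congr_ae
    filter_upwards [ae_restrict_mem measurableSet_Ioc] with x hx
    have e1 : ∀ t : ℝ, ({q : ℝ × ℝ | q.2 < q.1}).indicator (fun q => φ q.1 * ψ q.2) (x, t)
        = (Set.Iio x).indicator (fun t => φ x * ψ t) t := by
      intro t
      by_cases ht : t < x <;> simp [Set.indicator_apply, ht]
    rw [MeasureTheory.integral_congr_ae (Filter.Eventually.of_forall e1),
      MeasureTheory.integral_indicator measurableSet_Iio]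
    have e2 : μ.restrict (Set.Iio x) = volume.restrict (Set.Ioo a x) := by
      rw [hμ, Measure.restrict_restrict measurableSet_Iio]
      congr 1
      ext t
      constructor
      · rintro ⟨h1, h2, h3⟩; exact ⟨h2, h1⟩
      · rintro ⟨h1, h2⟩; exact ⟨h2, h1, le_trans h2.le hx.2⟩
    rw [e2, MeasureTheory.integral_const_mul, ← MeasureTheory.integral_Ioc_eq_integral_Ioo]
  have intK : Integrable (({q : ℝ × ℝ | q.2 < q.1}).indicator (fun q => f q.1 * h q.2))
      (μ.prod μ) := (Integrable.mul_prod hf hh).indicator hs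
  have intK' : Integrable (({q : ℝ × ℝ | q.2 < q.1}).indicator (fun q => h q.1 * f q.2))
      (μ.prod μ) := (Integrable.mul_prod hh hf).indicator hs
  have T1 : ∫ p, ({q : ℝ × ℝ | q.2 < q.1}).indicator (fun q => f q.1 * h q.2) p ∂(μ.prod μ)
      = ∫ x in Set.Ioc a b, f x * ∫ t in Set.Ioc a x, h t := by
    rw [MeasureTheory.integral_prod _ intK]
    exact stepA f h hh
  have T2 : ∫ p, ({q : ℝ × ℝ | q.2 < q.1}).indicator (fun q => h q.1 * f q.2) p ∂(μ.prod μ)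
      = ∫ x in Set.Ioc a b, h x * ∫ t in Set.Ioc a x, f t := by
    rw [MeasureTheory.integral_prod _ intK']
    exact stepA h f hf
  have T3 : ∫ p, ({q : ℝ × ℝ | q.2 < q.1}).indicator (fun q => h q.1 * f q.2) p ∂(μ.prod μ)
      = ∫ p, ({q : ℝ × ℝ | q.2 < q.1}).indicator (fun q => h q.1 * f q.2) p.swap ∂(μ.prod μ) :=
    (MeasureTheory.integral_prod_swap _).symm
  have hdiagmeas : MeasurableSet {p : ℝ × ℝ | p.1 = p.2} :=
    measurableSet_eq_fun measurable_fst measurable_snd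
  have hdiag : (μ.prod μ) {p : ℝ × ℝ | p.1 = p.2} = 0 := by
    rw [MeasureTheory.Measure.measure_prod_null hdiagmeas]
    refine Filter.Eventually.of_forall fun x => ?_
    show μ (Prod.mk x ⁻¹' {p : ℝ × ℝ | p.1 = p.2}) = 0
    have : (Prod.mk x ⁻¹' {p : ℝ × ℝ | p.1 = p.2}) = {x} := by
      ext t; simp [eq_comm]
    rw [this]
    exact measure_singleton x
  have hae : ∀ᵐ p ∂(μ.prod μ), p.1 ≠ (p.2 : ℝ) := by
    rw [MeasureTheory.ae_iff]
    simpa using hdiag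
  have T4 : ∫ p, (({q : ℝ × ℝ | q.2 < q.1}).indicator (fun q => f q.1 * h q.2) p
        + ({q : ℝ × ℝ | q.2 < q.1}).indicator (fun q => h q.1 * f q.2) p.swap) ∂(μ.prod μ)
      = ∫ p : ℝ × ℝ, f p.1 * h p.2 ∂(μ.prod μ) := by
    apply integral_congr_ae
    filter_upwards [hae] with p hp
    rcases lt_or_gt_of_ne hp with hlt | hgt
    · simp [Set.indicator_apply, Prod.swap, hlt, not_lt_of_gt hlt, mul_comm]
    · simp [Set.indicator_apply, Prod.swap, hgt, not_lt_of_gt hgt, mul_comm]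
  have T5 : (∫ p, (({q : ℝ × ℝ | q.2 < q.1}).indicator (fun q => f q.1 * h q.2) p
        + ({q : ℝ × ℝ | q.2 < q.1}).indicator (fun q => h q.1 * f q.2) p.swap) ∂(μ.prod μ))
      = (∫ p, ({q : ℝ × ℝ | q.2 < q.1}).indicator (fun q => f q.1 * h q.2) p ∂(μ.prod μ))
        + ∫ p, ({q : ℝ × ℝ | q.2 < q.1}).indicator (fun q => h q.1 * f q.2) p.swap ∂(μ.prod μ) :=
    integral_add intK intK'.swap
  rw [← T1, ← T2, T3, ← T5, T4, MeasureTheory.integral_prod_mul]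

lemma energy_identity {d : ℕ} (P1 : Matrix (Fin d) (Fin d) ℝ) (hP1T : P1ᵀ = P1)
    {a b : ℝ} (hab : a ≤ b) (v g : ℝ → Fin d → ℝ)
    (hg : IntegrableOn g (Set.Ioc a b))
    (hrep : ∀ x ∈ Set.Icc a b, v x = v a + ∫ s in a..x, g s) :
    (∫ x in a..b, (P1.mulVec (g x)) ⬝ᵥ (v x))
      = ((P1.mulVec (v b)) ⬝ᵥ (v b) - (P1.mulVec (v a)) ⬝ᵥ (v a)) / 2 := by
  have hsym : ∀ i j, P1 j i = P1 i j := by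
    intro i j
    simpa [Matrix.transpose_apply] using congrFun (congrFun hP1T i) j
  -- components of g are integrable
  have hgi : ∀ i, IntegrableOn (fun x => g x i) (Set.Ioc a b) := fun i =>
    (ContinuousLinearMap.proj (R := ℝ) (φ := fun _ : Fin d => ℝ) i).integrable_comp hg
  -- primitives
  set F : Fin d → ℝ → ℝ := fun i x => ∫ t in Set.Ioc a x, g t i with hF
  have hFc : ∀ i, ContinuousOn (F i) (Set.Icc a b) := fun i =>
    intervalIntegral.continuousOn_primitive
      ((integrableOn_Icc_iff_integrableOn_Ioc).mpr (hgi i))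
  -- component representation of v
  have hcomp : ∀ x ∈ Set.Icc a b, ∀ i, v x i = v a i + F i x := by
    intro x hx i
    have e := congrFun (hrep x hx) i
    rw [e, Pi.add_apply]
    congr 1
    rw [intervalIntegral.integral_of_le hx.1]
    exact ((ContinuousLinearMap.proj (R := ℝ) (φ := fun _ : Fin d => ℝ) i).integral_comp_comm
      (hg.mono_set (Set.Ioc_subset_Ioc_right hx.2))).symm
  -- integrability of products
  have hmulint : ∀ (φ : ℝ → ℝ), ContinuousOn φ (Set.Icc a b) → ∀ (ψ : ℝ → ℝ),
      IntegrableOn ψ (Set.Ioc a b) → Integrable (fun x => ψ x * φ x)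
        (volume.restrict (Set.Ioc a b)) := by
    intro φ hφ ψ hψ
    obtain ⟨C, hC⟩ := (isCompact_Icc (a := a) (b := b)).exists_bound_of_continuousOn hφ
    have hASM : AEStronglyMeasurable φ (volume.restrict (Set.Ioc a b)) :=
      (hφ.aestronglyMeasurable measurableSet_Icc).mono_measure
        (Measure.restrict_mono Set.Ioc_subset_Icc_self le_rfl)
    have hbound : ∀ᵐ x ∂(volume.restrict (Set.Ioc a b)), ‖φ x‖ ≤ C := by
      filter_upwards [ae_restrict_mem measurableSet_Ioc] with x hx
      exact hC x (Set.Ioc_subset_Icc_self hx)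
    have h1 : Integrable (fun x => φ x * ψ x) (volume.restrict (Set.Ioc a b)) :=
      Integrable.bdd_mul hψ hASM hbound
    exact h1.congr (Filter.Eventually.of_forall fun x => mul_comm _ _)
  have int2 : ∀ i j, Integrable (fun x => g x j * F i x) (volume.restrict (Set.Ioc a b)) :=
    fun i j => hmulint (F i) (hFc i) _ (hgi j)
  have intterm : ∀ i j, Integrable
      (fun x => (P1 i j * v a i) * g x j + P1 i j * (g x j * F i x))
      (volume.restrict (Set.Ioc a b)) :=
    fun i j => (((hgi j).const_mul _).add ((int2 i j).const_mul _))
  -- notation for full integrals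
  set I : Fin d → ℝ := fun i => ∫ x in Set.Ioc a b, g x i with hI
  set E : Fin d → Fin d → ℝ := fun i j => ∫ x in Set.Ioc a b, g x j * F i x with hE
  have hEsum : ∀ i j, E i j + E j i = I j * I i := by
    intro i j
    exact fubini_primitive (hgi j) (hgi i)
  -- main integral computation
  have hmain : (∫ x in a..b, (P1.mulVec (g x)) ⬝ᵥ (v x))
      = ∑ i, ∑ j, ((P1 i j * v a i) * I j + P1 i j * E i j) := by
    rw [intervalIntegral.integral_of_le hab]
    have e0 : ∀ x ∈ Set.Ioc a b, (P1.mulVec (g x)) ⬝ᵥ (v x)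
        = ∑ i, ∑ j, ((P1 i j * v a i) * g x j + P1 i j * (g x j * F i x)) := by
      intro x hx
      have hxI : x ∈ Set.Icc a b := ⟨le_of_lt hx.1, hx.2⟩
      have e1 : (P1.mulVec (g x)) ⬝ᵥ (v x) = ∑ i, ∑ j, P1 i j * g x j * v x i := by
        simp [Matrix.mulVec, dotProduct, Finset.sum_mul]
      rw [e1]
      refine Finset.sum_congr rfl fun i _ => Finset.sum_congr rfl fun j _ => ?_
      rw [hcomp x hxI i]; ring
    rw [setIntegral_congr_fun measurableSet_Ioc e0]
    rw [integral_finset_sum _ (fun i _ => integrable_finset_sum _ (fun j _ => intterm i j))]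
    refine Finset.sum_congr rfl fun i _ => ?_
    rw [integral_finset_sum _ (fun j _ => intterm i j)]
    refine Finset.sum_congr rfl fun j _ => ?_
    rw [integral_add ((hgi j).const_mul _) ((int2 i j).const_mul _),
      integral_const_mul, integral_const_mul]
  -- boundary values
  have hvb : ∀ i, v b i = v a i + I i := fun i => hcomp b ⟨hab, le_refl b⟩ i
  have hdotb : (P1.mulVec (v b)) ⬝ᵥ (v b) = ∑ i, ∑ j, P1 i j * (v a j + I j) * (v a i + I i) := by
    have e1 : (P1.mulVec (v b)) ⬝ᵥ (v b) = ∑ i, ∑ j, P1 i j * v b j * v b i := by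
      simp [Matrix.mulVec, dotProduct, Finset.sum_mul]
    rw [e1]
    exact Finset.sum_congr rfl fun i _ => Finset.sum_congr rfl fun j _ => by rw [hvb i, hvb j]
  have hdota : (P1.mulVec (v a)) ⬝ᵥ (v a) = ∑ i, ∑ j, P1 i j * v a j * v a i := by
    simp [Matrix.mulVec, dotProduct, Finset.sum_mul]
  -- symmetric swap of double sums
  have swapsym : ∀ (G : Fin d → Fin d → ℝ),
      (∑ i, ∑ j, P1 i j * G i j) = ∑ i, ∑ j, P1 i j * G j i := by
    intro G
    rw [Finset.sum_comm]
    exact Finset.sum_congr rfl fun j _ => Finset.sum_congr rfl fun i _ => by rw [hsym]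
  -- final algebra
  rw [hmain, hdotb, hdota]
  have hA : ∑ i, ∑ j, ((P1 i j * v a i) * I j + P1 i j * E i j)
      = (∑ i, ∑ j, P1 i j * (v a i * I j)) + ∑ i, ∑ j, P1 i j * E i j := by
    rw [← Finset.sum_add_distrib]
    refine Finset.sum_congr rfl fun i _ => ?_
    rw [← Finset.sum_add_distrib]
    exact Finset.sum_congr rfl fun j _ => by ring
  have hB : (∑ i, ∑ j, P1 i j * (v a j + I j) * (v a i + I i))
      = (∑ i, ∑ j, P1 i j * v a j * v a i) + (∑ i, ∑ j, P1 i j * (v a j * I i))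
        + (∑ i, ∑ j, P1 i j * (v a i * I j)) + ∑ i, ∑ j, P1 i j * (I j * I i) := by
    rw [← Finset.sum_add_distrib, ← Finset.sum_add_distrib, ← Finset.sum_add_distrib]
    refine Finset.sum_congr rfl fun i _ => ?_
    rw [← Finset.sum_add_distrib, ← Finset.sum_add_distrib, ← Finset.sum_add_distrib]
    exact Finset.sum_congr rfl fun j _ => by ring
  have hC : (∑ i, ∑ j, P1 i j * (v a j * I i)) = ∑ i, ∑ j, P1 i j * (v a i * I j) :=
    swapsym _
  have hD : (∑ i, ∑ j, P1 i j * E i j) + (∑ i, ∑ j, P1 i j * E i j)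
      = ∑ i, ∑ j, P1 i j * (I j * I i) := by
    conv_lhs => rw [show (∑ i, ∑ j, P1 i j * E i j) + (∑ i, ∑ j, P1 i j * E i j)
      = (∑ i, ∑ j, P1 i j * E i j) + (∑ i, ∑ j, P1 i j * E j i) from by rw [← swapsym]]
    rw [← Finset.sum_add_distrib]
    refine Finset.sum_congr rfl fun i _ => ?_
    rw [← Finset.sum_add_distrib]
    refine Finset.sum_congr rfl fun j _ => ?_
    rw [← mul_add, hEsum]
  rw [hA, hB, hC]
  linarith [hD]

lemma euclNorm_sq (x : Fin d → ℝ) : euclNorm x ^ 2 = x ⬝ᵥ x := by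
  rw [euclNorm, EuclideanSpace.norm_eq, Real.sq_sqrt (by positivity)]
  simp [dotProduct, Real.norm_eq_abs, sq_abs, sq]

end Aux

/-- **Lemma 5.4.** Equivalence of the real-part boundary inequality
`∫_a^b ⟨P₁ v', v⟩ ≥ c ‖v(η)‖²` (for all `H¹` functions `v` satisfying the
boundary condition given by `M`) with a finite-dimensional inequality,
for `η = a` (part I) and `η = b` (part II). Here `n₊(z)² = ⟨P₁⁻¹P₊z, z⟩`
and `n₋(z)² = −⟨P₁⁻¹P₋z, z⟩`. -/
theorem stmt_7 {d : ℕ} (P1 absP1 Qp Qm Pp Pm : Matrix (Fin d) (Fin d) ℝ)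
    (hP1symm : P1.IsSymm) (hP1inv : IsUnit P1.det)
    (habs : absP1.PosDef) (habs2 : absP1 ^ 2 = P1 ^ 2)
    (hQp : Qp.PosSemidef) (hQp2 : Qp ^ 2 = (2 : ℝ)⁻¹ • (absP1 + P1))
    (hQm : Qm.PosSemidef) (hQm2 : Qm ^ 2 = (2 : ℝ)⁻¹ • (absP1 - P1))
    (hPp : Pp = (2 : ℝ)⁻¹ • ((1 : Matrix (Fin d) (Fin d) ℝ) + absP1⁻¹ * P1))
    (hPm : Pm = (2 : ℝ)⁻¹ • ((1 : Matrix (Fin d) (Fin d) ℝ) - absP1⁻¹ * P1))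
    (a b : ℝ) (hab : a < b) (c : ℝ) (hc : 0 < c)
    (M : Matrix (Fin d) (Fin d) ℝ) (hM : specNorm M ≤ 1)
    -- squared `E₊`- and `E₋`-norms
    (np2 nm2 : (Fin d → ℝ) → ℝ)
    (hnp2 : ∀ z, np2 z = (P1⁻¹ * Pp).mulVec z ⬝ᵥ z)
    (hnm2 : ∀ z, nm2 z = -((P1⁻¹ * Pm).mulVec z ⬝ᵥ z)) :
    -- (I)
    ((∀ v g : ℝ → Fin d → ℝ,
        ContinuousOn v (Set.Icc a b) →
        MemLp g 2 (volume.restrict (Set.Ioc a b)) →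
        (∀ x ∈ Set.Icc a b, v x = v a + ∫ s in a..x, g s) →
        Qp.mulVec (v a) + Qm.mulVec (v b) =
          M.mulVec (Qp.mulVec (v b) + Qm.mulVec (v a)) →
        (∫ x in a..b, (P1.mulVec (g x)) ⬝ᵥ (v x)) ≥ c * euclNorm (v a) ^ 2) ↔
      (∀ y : Fin d → ℝ,
        euclNorm y ^ 2 - euclNorm (M.mulVec y) ^ 2 ≥
          2 * c * (np2 (M.mulVec y) + nm2 y))) ∧
    -- (II)
    ((∀ v g : ℝ → Fin d → ℝ,
        ContinuousOn v (Set.Icc a b) →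
        MemLp g 2 (volume.restrict (Set.Ioc a b)) →
        (∀ x ∈ Set.Icc a b, v x = v a + ∫ s in a..x, g s) →
        Qp.mulVec (v a) + Qm.mulVec (v b) =
          M.mulVec (Qp.mulVec (v b) + Qm.mulVec (v a)) →
        (∫ x in a..b, (P1.mulVec (g x)) ⬝ᵥ (v x)) ≥ c * euclNorm (v b) ^ 2) ↔
      (∀ y : Fin d → ℝ,
        euclNorm y ^ 2 - euclNorm (M.mulVec y) ^ 2 ≥
          2 * c * (np2 y + nm2 (M.mulVec y)))) := by
  obtain ⟨F1, F2, F3, F4, F5, F6⟩ := matrix_facts P1 absP1 Qp Qm Pp Pm hP1symm hP1inv habs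
    habs2 hQp hQp2 hQm hQm2 hPp hPm
  have hP1T : P1ᵀ = P1 := hP1symm
  have hab' : a ≤ b := le_of_lt hab
  haveI : IsFiniteMeasure (volume.restrict (Set.Ioc a b)) :=
    ⟨by rw [Measure.restrict_apply_univ]; exact measure_Ioc_lt_top⟩
  -- the energy identity for admissible (v, g)
  have VL : ∀ v g : ℝ → Fin d → ℝ, MemLp g 2 (volume.restrict (Set.Ioc a b)) →
      (∀ x ∈ Set.Icc a b, v x = v a + ∫ s in a..x, g s) →
      (∫ x in a..b, (P1.mulVec (g x)) ⬝ᵥ (v x))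
        = ((P1.mulVec (v b)) ⬝ᵥ (v b) - (P1.mulVec (v a)) ⬝ᵥ (v a)) / 2 := by
    intro v g hg hrep
    exact energy_identity P1 hP1T hab' v g (MemLp.integrable one_le_two hg) hrep
  -- boundary-energy computations
  have EN : ∀ va vb y : Fin d → ℝ, Qp *ᵥ vb + Qm *ᵥ va = y →
      Qp *ᵥ va + Qm *ᵥ vb = M *ᵥ y →
      ((P1 *ᵥ vb) ⬝ᵥ vb - (P1 *ᵥ va) ⬝ᵥ va = euclNorm y ^ 2 - euclNorm (M *ᵥ y) ^ 2
        ∧ np2 (M *ᵥ y) + nm2 y = euclNorm va ^ 2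
        ∧ np2 y + nm2 (M *ᵥ y) = euclNorm vb ^ 2) := by
    intro va vb y h1 h2
    subst h1
    refine ⟨?_, ?_, ?_⟩
    · rw [F1 vb, F1 va, euclNorm_sq, euclNorm_sq, ← h2, F2, F2]
      ring
    · rw [hnp2, hnm2, ← h2, F3, F4, euclNorm_sq, neg_neg]
      exact F5 va
    · rw [hnp2, hnm2, ← h2, F3, F4, euclNorm_sq, neg_neg]
      linarith [F5 vb]
  -- construction of the linear test function for a given y
  have CONSTR : ∀ y : Fin d → ℝ, ∃ va vb : Fin d → ℝ, ∃ v g : ℝ → Fin d → ℝ,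
      v a = va ∧ v b = vb ∧
      ContinuousOn v (Set.Icc a b) ∧
      MemLp g 2 (volume.restrict (Set.Ioc a b)) ∧
      (∀ x ∈ Set.Icc a b, v x = v a + ∫ s in a..x, g s) ∧
      (Qp *ᵥ vb + Qm *ᵥ va = y) ∧ (Qp *ᵥ va + Qm *ᵥ vb = M *ᵥ y) := by
    intro y
    obtain ⟨va, vb, h1, h2⟩ := F6 y (M *ᵥ y)
    have hba : b - a ≠ 0 := sub_ne_zero.mpr hab.ne'
    refine ⟨va, vb, fun x => va + (x - a) • ((b - a)⁻¹ • (vb - va)),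
      fun _ => (b - a)⁻¹ • (vb - va), ?_, ?_, ?_, ?_, ?_, h1, h2⟩
    · simp
    · show va + (b - a) • ((b - a)⁻¹ • (vb - va)) = vb
      rw [smul_smul, mul_inv_cancel₀ hba, one_smul, add_sub_cancel]
    · exact (continuous_const.add (((continuous_id'.sub continuous_const)).smul
        continuous_const)).continuousOn
    · exact memLp_const _
    · intro x hx
      show va + (x - a) • ((b - a)⁻¹ • (vb - va))
          = (va + (a - a) • ((b - a)⁻¹ • (vb - va))) + ∫ _ in a..x, (b - a)⁻¹ • (vb - va)
      rw [intervalIntegral.integral_const]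
      simp
  constructor
  · -- Part I
    constructor
    · intro H y
      obtain ⟨va, vb, v, g, hva, hvb, hcont, hmem, hrep, h1, h2⟩ := CONSTR y
      obtain ⟨e1, e2, e3⟩ := EN va vb y h1 h2
      have hBC : Qp *ᵥ (v a) + Qm *ᵥ (v b) = M *ᵥ (Qp *ᵥ (v b) + Qm *ᵥ (v a)) := by
        rw [hva, hvb, h1]; exact h2
      have hInt := H v g hcont hmem hrep hBC
      rw [VL v g hmem hrep, hva, hvb, e1] at hInt
      rw [← e2] at hInt
      linarith [hInt]
    · intro Hfd v g hcont hmem hrep hBC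
      obtain ⟨e1, e2, e3⟩ := EN (v a) (v b) (Qp *ᵥ (v b) + Qm *ᵥ (v a)) rfl hBC
      rw [VL v g hmem hrep, e1, ← e2]
      have := Hfd (Qp *ᵥ (v b) + Qm *ᵥ (v a))
      linarith [this]
  · -- Part II
    constructor
    · intro H y
      obtain ⟨va, vb, v, g, hva, hvb, hcont, hmem, hrep, h1, h2⟩ := CONSTR y
      obtain ⟨e1, e2, e3⟩ := EN va vb y h1 h2
      have hBC : Qp *ᵥ (v a) + Qm *ᵥ (v b) = M *ᵥ (Qp *ᵥ (v b) + Qm *ᵥ (v a)) := by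
        rw [hva, hvb, h1]; exact h2
      have hInt := H v g hcont hmem hrep hBC
      rw [VL v g hmem hrep, hva, hvb, e1] at hInt
      rw [← e3] at hInt
      linarith [hInt]
    · intro Hfd v g hcont hmem hrep hBC
      obtain ⟨e1, e2, e3⟩ := EN (v a) (v b) (Qp *ᵥ (v b) + Qm *ᵥ (v a)) rfl hBC
      rw [VL v g hmem hrep, e1, ← e3]
      have := Hfd (Qp *ᵥ (v b) + Qm *ᵥ (v a))
      linarith [this]

end
end
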